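/- A finite irreflexive binary relation R on a set P is a dicograph (i.e., constructible from singletons by parallel composition, directed series composition, and symmetric series composition) if and only if: (1) the asymmetric part of R is N-free (a series-parallel order), (2) the symmetric part of R is P4-free (a cograph), and (3) R is weakly transitive: for all a,b,c, if (a,b) is in the asymmetric part of R and (b,c) ∈ R then (a,c) ∈ R, and if (a,b) ∈ R and (b,c) is in the asymmetric part of R then (a,c) ∈ R. -/

import Mathlib

/-- Terms denoting dicographs: built from single points by parallel composition `⅋`,
symmetric series composition `⊗` and directed series composition `◁`. -/
inductive DTerm (V : Type) : Type
  | leaf : V → DTerm V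
  | par : DTerm V → DTerm V → DTerm V
  | tens : DTerm V → DTerm V → DTerm V
  | seq : DTerm V → DTerm V → DTerm V

namespace DTerm

/-- The list of points (leaves) of a term. -/
def leaves {V : Type} : DTerm V → List V
  | leaf v => [v]
  | par s t => leaves s ++ leaves t
  | tens s t => leaves s ++ leaves t
  | seq s t => leaves s ++ leaves t

/-- The irreflexive binary relation (dicograph) denoted by a term:
`⅋` is disjoint union, `⊗` adds all pairs in both directions between the two domains,
`◁` adds all arcs from the first domain to the second. -/
def rel {V : Type} : DTerm V → V → V → Prop
  | leaf _ => fun _ _ => False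
  | par s t => fun a b => rel s a b ∨ rel t a b
  | tens s t => fun a b =>
      rel s a b ∨ rel t a b ∨ (a ∈ leaves s ∧ b ∈ leaves t) ∨ (a ∈ leaves t ∧ b ∈ leaves s)
  | seq s t => fun a b => rel s a b ∨ rel t a b ∨ (a ∈ leaves s ∧ b ∈ leaves t)

end DTerm

/-- `R` is a dicograph with domain `E`: it is denoted by some term with pairwise
distinct leaves (i.e. it is constructible from singletons by the three compositions). -/
def IsDicograph {V : Type} (E : Set V) (R : V → V → Prop) : Prop :=
  ∃ T : DTerm V, T.leaves.Nodup ∧ (∀ v, v ∈ T.leaves ↔ v ∈ E) ∧ (∀ a b, T.rel a b ↔ R a b)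

/-- The asymmetric (arc) part of a relation. -/
def asymPart {V : Type} (R : V → V → Prop) (a b : V) : Prop := R a b ∧ ¬ R b a

/-- The symmetric (edge) part of a relation. -/
def symPart {V : Type} (R : V → V → Prop) (a b : V) : Prop := R a b ∧ R b a

/-- `S` is N-free: no induced sub-order isomorphic to the `N` poset
(`a < c`, `b < c`, `b < d`, and no other relation among the four points). -/
def NFree {V : Type} (S : V → V → Prop) : Prop :=
  ¬ ∃ a b c d : V, a ≠ b ∧ a ≠ c ∧ a ≠ d ∧ b ≠ c ∧ b ≠ d ∧ c ≠ d ∧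
      S a c ∧ S b c ∧ S b d ∧
      ¬ S a b ∧ ¬ S b a ∧ ¬ S a d ∧ ¬ S d a ∧ ¬ S c d ∧ ¬ S d c ∧
      ¬ S c a ∧ ¬ S c b ∧ ¬ S d b

/-- `S` is P4-free: no four vertices induce a path `a—b—c—d`. -/
def P4Free {V : Type} (S : V → V → Prop) : Prop :=
  ¬ ∃ a b c d : V, a ≠ b ∧ a ≠ c ∧ a ≠ d ∧ b ≠ c ∧ b ≠ d ∧ c ≠ d ∧
      S a b ∧ S b c ∧ S c d ∧ ¬ S a c ∧ ¬ S a d ∧ ¬ S b d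

/-- Weak transitivity: arcs compose with any relation on either side. -/
def WeaklyTransitive {V : Type} (R : V → V → Prop) : Prop :=
  ∀ a b c : V, (asymPart R a b → R b c → R a c) ∧ (R a b → asymPart R b c → R a c)


namespace DTerm
variable {V : Type}

lemma mem_of_rel : ∀ (T : DTerm V) {a b : V}, T.rel a b → a ∈ T.leaves ∧ b ∈ T.leaves := by
  intro T
  induction T with
  | leaf v => intro a b h; exact h.elim
  | par s t ihs iht =>
      intro a b h
      rcases h with h | h
      · obtain ⟨h1, h2⟩ := ihs h
        exact ⟨List.mem_append_left _ h1, List.mem_append_left _ h2⟩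
      · obtain ⟨h1, h2⟩ := iht h
        exact ⟨List.mem_append_right _ h1, List.mem_append_right _ h2⟩
  | tens s t ihs iht =>
      intro a b h
      rcases h with h | h | ⟨h1, h2⟩ | ⟨h1, h2⟩
      · obtain ⟨h1, h2⟩ := ihs h
        exact ⟨List.mem_append_left _ h1, List.mem_append_left _ h2⟩
      · obtain ⟨h1, h2⟩ := iht h
        exact ⟨List.mem_append_right _ h1, List.mem_append_right _ h2⟩
      · exact ⟨List.mem_append_left _ h1, List.mem_append_right _ h2⟩
      · exact ⟨List.mem_append_right _ h1, List.mem_append_left _ h2⟩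
  | seq s t ihs iht =>
      intro a b h
      rcases h with h | h | ⟨h1, h2⟩
      · obtain ⟨h1, h2⟩ := ihs h
        exact ⟨List.mem_append_left _ h1, List.mem_append_left _ h2⟩
      · obtain ⟨h1, h2⟩ := iht h
        exact ⟨List.mem_append_right _ h1, List.mem_append_right _ h2⟩
      · exact ⟨List.mem_append_left _ h1, List.mem_append_right _ h2⟩

section chars
variable {s t : DTerm V}
variable (hdisj : ∀ x : V, x ∈ s.leaves → x ∈ t.leaves → False)

include hdisj

lemma asym_par_iff {a b : V} :
    asymPart (par s t).rel a b ↔ asymPart s.rel a b ∨ asymPart t.rel a b := by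
  constructor
  · rintro ⟨h, hn⟩
    rcases h with h | h
    · exact Or.inl ⟨h, fun h' => hn (Or.inl h')⟩
    · exact Or.inr ⟨h, fun h' => hn (Or.inr h')⟩
  · rintro (⟨h, hn⟩ | ⟨h, hn⟩)
    · refine ⟨Or.inl h, ?_⟩
      rintro (h' | h')
      · exact hn h'
      · exact hdisj b (mem_of_rel s h).2 (mem_of_rel t h').1
    · refine ⟨Or.inr h, ?_⟩
      rintro (h' | h')
      · exact hdisj b (mem_of_rel s h').1 (mem_of_rel t h).2
      · exact hn h'

lemma sym_par_iff {a b : V} :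
    symPart (par s t).rel a b ↔ symPart s.rel a b ∨ symPart t.rel a b := by
  constructor
  · rintro ⟨h1, h2⟩
    rcases h1 with h1 | h1 <;> rcases h2 with h2 | h2
    · exact Or.inl ⟨h1, h2⟩
    · exact absurd (mem_of_rel t h2).2 (fun h => hdisj a (mem_of_rel s h1).1 h)
    · exact absurd (mem_of_rel t h1).1 (fun h => hdisj a (mem_of_rel s h2).2 h)
    · exact Or.inr ⟨h1, h2⟩
  · rintro (⟨h1, h2⟩ | ⟨h1, h2⟩)
    · exact ⟨Or.inl h1, Or.inl h2⟩
    · exact ⟨Or.inr h1, Or.inr h2⟩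

lemma asym_tens_iff {a b : V} :
    asymPart (tens s t).rel a b ↔ asymPart s.rel a b ∨ asymPart t.rel a b := by
  constructor
  · rintro ⟨h, hn⟩
    rcases h with h | h | ⟨h1, h2⟩ | ⟨h1, h2⟩
    · exact Or.inl ⟨h, fun h' => hn (Or.inl h')⟩
    · exact Or.inr ⟨h, fun h' => hn (Or.inr (Or.inl h'))⟩
    · exact absurd (Or.inr (Or.inr (Or.inr ⟨h2, h1⟩))) hn
    · exact absurd (Or.inr (Or.inr (Or.inl ⟨h2, h1⟩))) hn
  · rintro (⟨h, hn⟩ | ⟨h, hn⟩)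
    · obtain ⟨ha, hb⟩ := mem_of_rel s h
      refine ⟨Or.inl h, ?_⟩
      rintro (h' | h' | ⟨h1, h2⟩ | ⟨h1, h2⟩)
      · exact hn h'
      · exact hdisj b hb (mem_of_rel t h').1
      · exact hdisj a ha h2
      · exact hdisj b hb h1
    · obtain ⟨ha, hb⟩ := mem_of_rel t h
      refine ⟨Or.inr (Or.inl h), ?_⟩
      rintro (h' | h' | ⟨h1, h2⟩ | ⟨h1, h2⟩)
      · exact hdisj b (mem_of_rel s h').1 hb
      · exact hn h'
      · exact hdisj b h1 hb
      · exact hdisj a h2 ha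
  
lemma sym_tens_iff {a b : V} :
    symPart (tens s t).rel a b ↔ symPart s.rel a b ∨ symPart t.rel a b ∨
      (a ∈ s.leaves ∧ b ∈ t.leaves) ∨ (a ∈ t.leaves ∧ b ∈ s.leaves) := by
  constructor
  · rintro ⟨h1, h2⟩
    rcases h1 with h1 | h1 | ⟨hx, hy⟩ | ⟨hx, hy⟩
    · obtain ⟨ha, hb⟩ := mem_of_rel s h1
      rcases h2 with h2 | h2 | ⟨hx, hy⟩ | ⟨hx, hy⟩
      · exact Or.inl ⟨h1, h2⟩
      · exact absurd (mem_of_rel t h2).2 (hdisj a ha)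
      · exact absurd hy (hdisj a ha)
      · exact absurd hx (hdisj b hb)
    · obtain ⟨ha, hb⟩ := mem_of_rel t h1
      rcases h2 with h2 | h2 | ⟨hx, hy⟩ | ⟨hx, hy⟩
      · exact absurd ha (hdisj a (mem_of_rel s h2).2)
      · exact Or.inr (Or.inl ⟨h1, h2⟩)
      · exact absurd hb (hdisj b hx)
      · exact absurd ha (hdisj a hy)
    · exact Or.inr (Or.inr (Or.inl ⟨hx, hy⟩))
    · exact Or.inr (Or.inr (Or.inr ⟨hx, hy⟩))
  · rintro (⟨h1, h2⟩ | ⟨h1, h2⟩ | ⟨h1, h2⟩ | ⟨h1, h2⟩)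
    · exact ⟨Or.inl h1, Or.inl h2⟩
    · exact ⟨Or.inr (Or.inl h1), Or.inr (Or.inl h2)⟩
    · exact ⟨Or.inr (Or.inr (Or.inl ⟨h1, h2⟩)), Or.inr (Or.inr (Or.inr ⟨h2, h1⟩))⟩
    · exact ⟨Or.inr (Or.inr (Or.inr ⟨h1, h2⟩)), Or.inr (Or.inr (Or.inl ⟨h2, h1⟩))⟩

lemma asym_seq_iff {a b : V} :
    asymPart (seq s t).rel a b ↔ asymPart s.rel a b ∨ asymPart t.rel a b ∨
      (a ∈ s.leaves ∧ b ∈ t.leaves) := by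
  constructor
  · rintro ⟨h, hn⟩
    rcases h with h | h | ⟨h1, h2⟩
    · exact Or.inl ⟨h, fun h' => hn (Or.inl h')⟩
    · exact Or.inr (Or.inl ⟨h, fun h' => hn (Or.inr (Or.inl h'))⟩)
    · exact Or.inr (Or.inr ⟨h1, h2⟩)
  · rintro (⟨h, hn⟩ | ⟨h, hn⟩ | ⟨h1, h2⟩)
    · obtain ⟨ha, hb⟩ := mem_of_rel s h
      refine ⟨Or.inl h, ?_⟩
      rintro (h' | h' | ⟨hx, hy⟩)
      · exact hn h'
      · exact hdisj b hb (mem_of_rel t h').1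
      · exact (hdisj a ha hy).elim
    · obtain ⟨ha, hb⟩ := mem_of_rel t h
      refine ⟨Or.inr (Or.inl h), ?_⟩
      rintro (h' | h' | ⟨hx, hy⟩)
      · exact hdisj b (mem_of_rel s h').1 hb
      · exact hn h'
      · exact hdisj b hx hb
    · refine ⟨Or.inr (Or.inr ⟨h1, h2⟩), ?_⟩
      rintro (h' | h' | ⟨hx, hy⟩)
      · exact hdisj b (mem_of_rel s h').1 h2
      · exact hdisj a h1 (mem_of_rel t h').2
      · exact hdisj a h1 hy

lemma sym_seq_iff {a b : V} :
    symPart (seq s t).rel a b ↔ symPart s.rel a b ∨ symPart t.rel a b := by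
  constructor
  · rintro ⟨h1, h2⟩
    rcases h1 with h1 | h1 | ⟨hx, hy⟩
    · obtain ⟨ha, hb⟩ := mem_of_rel s h1
      rcases h2 with h2 | h2 | ⟨hx, hy⟩
      · exact Or.inl ⟨h1, h2⟩
      · exact absurd (mem_of_rel t h2).2 (hdisj a ha)
      · exact (hdisj a ha hy).elim
    · obtain ⟨ha, hb⟩ := mem_of_rel t h1
      rcases h2 with h2 | h2 | ⟨hx, hy⟩
      · exact absurd ha (hdisj a (mem_of_rel s h2).2)
      · exact Or.inr ⟨h1, h2⟩
      · exact (hdisj b hx hb).elim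
    · rcases h2 with h2 | h2 | ⟨hx', hy'⟩
      · exact (hdisj b (mem_of_rel s h2).1 hy).elim
      · exact (hdisj a hx (mem_of_rel t h2).2).elim
      · exact (hdisj a hx hy').elim
  · rintro (⟨h1, h2⟩ | ⟨h1, h2⟩)
    · exact ⟨Or.inl h1, Or.inl h2⟩
    · exact ⟨Or.inr (Or.inl h1), Or.inr (Or.inl h2)⟩

end chars
end DTerm

section unions
variable {V : Type}

lemma NFree.union {S S1 S2 : V → V → Prop} {L1 L2 : List V}
    (hchar : ∀ x y, S x y ↔ S1 x y ∨ S2 x y)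
    (hm1 : ∀ {x y}, S1 x y → x ∈ L1 ∧ y ∈ L1) (hm2 : ∀ {x y}, S2 x y → x ∈ L2 ∧ y ∈ L2)
    (hd : ∀ x, x ∈ L1 → x ∈ L2 → False)
    (h1 : NFree S1) (h2 : NFree S2) : NFree S := by
  rintro ⟨a, b, c, d, n1, n2, n3, n4, n5, n6, p1, p2, p3,
    q1, q2, q3, q4, q5, q6, q7, q8, q9⟩
  have t1 : ∀ {x y}, ¬ S x y → ¬ S1 x y := fun hq h => hq ((hchar _ _).2 (Or.inl h))
  have t2 : ∀ {x y}, ¬ S x y → ¬ S2 x y := fun hq h => hq ((hchar _ _).2 (Or.inr h))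
  rcases (hchar a c).1 p1 with h | h
  · have p2' : S1 b c := by
      rcases (hchar b c).1 p2 with h' | h'
      · exact h'
      · exact (hd c (hm1 h).2 (hm2 h').2).elim
    have p3' : S1 b d := by
      rcases (hchar b d).1 p3 with h' | h'
      · exact h'
      · exact (hd b (hm1 p2').1 (hm2 h').1).elim
    exact h1 ⟨a, b, c, d, n1, n2, n3, n4, n5, n6, h, p2', p3',
      t1 q1, t1 q2, t1 q3, t1 q4, t1 q5, t1 q6, t1 q7, t1 q8, t1 q9⟩
  · have p2' : S2 b c := by
      rcases (hchar b c).1 p2 with h' | h'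
      · exact (hd c (hm1 h').2 (hm2 h).2).elim
      · exact h'
    have p3' : S2 b d := by
      rcases (hchar b d).1 p3 with h' | h'
      · exact (hd b (hm1 h').1 (hm2 p2').1).elim
      · exact h'
    exact h2 ⟨a, b, c, d, n1, n2, n3, n4, n5, n6, h, p2', p3',
      t2 q1, t2 q2, t2 q3, t2 q4, t2 q5, t2 q6, t2 q7, t2 q8, t2 q9⟩

lemma P4Free.union {S S1 S2 : V → V → Prop} {L1 L2 : List V}
    (hchar : ∀ x y, S x y ↔ S1 x y ∨ S2 x y)
    (hm1 : ∀ {x y}, S1 x y → x ∈ L1 ∧ y ∈ L1) (hm2 : ∀ {x y}, S2 x y → x ∈ L2 ∧ y ∈ L2)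
    (hd : ∀ x, x ∈ L1 → x ∈ L2 → False)
    (h1 : P4Free S1) (h2 : P4Free S2) : P4Free S := by
  rintro ⟨a, b, c, d, n1, n2, n3, n4, n5, n6, p1, p2, p3, q1, q2, q3⟩
  have t1 : ∀ {x y}, ¬ S x y → ¬ S1 x y := fun hq h => hq ((hchar _ _).2 (Or.inl h))
  have t2 : ∀ {x y}, ¬ S x y → ¬ S2 x y := fun hq h => hq ((hchar _ _).2 (Or.inr h))
  rcases (hchar a b).1 p1 with h | h
  · have p2' : S1 b c := by
      rcases (hchar b c).1 p2 with h' | h'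
      · exact h'
      · exact (hd b (hm1 h).2 (hm2 h').1).elim
    have p3' : S1 c d := by
      rcases (hchar c d).1 p3 with h' | h'
      · exact h'
      · exact (hd c (hm1 p2').2 (hm2 h').1).elim
    exact h1 ⟨a, b, c, d, n1, n2, n3, n4, n5, n6, h, p2', p3', t1 q1, t1 q2, t1 q3⟩
  · have p2' : S2 b c := by
      rcases (hchar b c).1 p2 with h' | h'
      · exact (hd b (hm1 h').1 (hm2 h).2).elim
      · exact h'
    have p3' : S2 c d := by
      rcases (hchar c d).1 p3 with h' | h'
      · exact (hd c (hm1 h').1 (hm2 p2').2).elim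
      · exact h'
    exact h2 ⟨a, b, c, d, n1, n2, n3, n4, n5, n6, h, p2', p3', t2 q1, t2 q2, t2 q3⟩

lemma NFree.seqUnion {S S1 S2 : V → V → Prop} {L1 L2 : List V}
    (hchar : ∀ x y, S x y ↔ S1 x y ∨ S2 x y ∨ (x ∈ L1 ∧ y ∈ L2))
    (hm1 : ∀ {x y}, S1 x y → x ∈ L1 ∧ y ∈ L1) (hm2 : ∀ {x y}, S2 x y → x ∈ L2 ∧ y ∈ L2)
    (hd : ∀ x, x ∈ L1 → x ∈ L2 → False)
    (h1 : NFree S1) (h2 : NFree S2) : NFree S := by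
  rintro ⟨a, b, c, d, n1, n2, n3, n4, n5, n6, p1, p2, p3,
    q1, q2, q3, q4, q5, q6, q7, q8, q9⟩
  have t1 : ∀ {x y}, ¬ S x y → ¬ S1 x y := fun hq h => hq ((hchar _ _).2 (Or.inl h))
  have t2 : ∀ {x y}, ¬ S x y → ¬ S2 x y := fun hq h => hq ((hchar _ _).2 (Or.inr (Or.inl h)))
  have mem : ∀ {x y}, S x y → (x ∈ L1 ∨ x ∈ L2) ∧ (y ∈ L1 ∨ y ∈ L2) := by
    intro x y h
    rcases (hchar x y).1 h with h | h | h
    · exact ⟨Or.inl (hm1 h).1, Or.inl (hm1 h).2⟩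
    · exact ⟨Or.inr (hm2 h).1, Or.inr (hm2 h).2⟩
    · exact ⟨Or.inl h.1, Or.inr h.2⟩
  have ma := (mem p1).1
  have mb := (mem p2).1
  have mc := (mem p1).2
  have md := (mem p3).2
  have ss : ∀ {x y}, ¬ S x y → ¬ S y x → (x ∈ L1 ∨ x ∈ L2) → (y ∈ L1 ∨ y ∈ L2) →
      (x ∈ L1 ∧ y ∈ L1) ∨ (x ∈ L2 ∧ y ∈ L2) := by
    intro x y hxy hyx mx my
    rcases mx with mx | mx
    · rcases my with my | my
      · exact Or.inl ⟨mx, my⟩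
      · exact (hxy ((hchar x y).2 (Or.inr (Or.inr ⟨mx, my⟩)))).elim
    · rcases my with my | my
      · exact (hyx ((hchar y x).2 (Or.inr (Or.inr ⟨my, mx⟩)))).elim
      · exact Or.inr ⟨mx, my⟩
  have red1 : ∀ {x y}, S x y → x ∈ L1 → y ∈ L1 → S1 x y := by
    intro x y h hx hy
    rcases (hchar x y).1 h with h | h | h
    · exact h
    · exact (hd x hx (hm2 h).1).elim
    · exact (hd y hy h.2).elim
  have red2 : ∀ {x y}, S x y → x ∈ L2 → y ∈ L2 → S2 x y := by
    intro x y h hx hy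
    rcases (hchar x y).1 h with h | h | h
    · exact (hd x (hm1 h).1 hx).elim
    · exact h
    · exact (hd x h.1 hx).elim
  rcases ss q1 q2 ma mb with ⟨a1, b1⟩ | ⟨a2, b2⟩
  · have d1 : d ∈ L1 := by
      rcases ss q3 q4 ma md with ⟨_, h⟩ | ⟨h, _⟩
      · exact h
      · exact (hd a a1 h).elim
    have c1 : c ∈ L1 := by
      rcases ss q5 q6 mc md with ⟨h, _⟩ | ⟨_, h⟩
      · exact h
      · exact (hd d d1 h).elim
    exact h1 ⟨a, b, c, d, n1, n2, n3, n4, n5, n6, red1 p1 a1 c1, red1 p2 b1 c1,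
      red1 p3 b1 d1, t1 q1, t1 q2, t1 q3, t1 q4, t1 q5, t1 q6, t1 q7, t1 q8, t1 q9⟩
  · have d2 : d ∈ L2 := by
      rcases ss q3 q4 ma md with ⟨h, _⟩ | ⟨_, h⟩
      · exact (hd a h a2).elim
      · exact h
    have c2 : c ∈ L2 := by
      rcases ss q5 q6 mc md with ⟨_, h⟩ | ⟨h, _⟩
      · exact (hd d h d2).elim
      · exact h
    exact h2 ⟨a, b, c, d, n1, n2, n3, n4, n5, n6, red2 p1 a2 c2, red2 p2 b2 c2,
      red2 p3 b2 d2, t2 q1, t2 q2, t2 q3, t2 q4, t2 q5, t2 q6, t2 q7, t2 q8, t2 q9⟩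

lemma P4Free.tensUnion {S S1 S2 : V → V → Prop} {L1 L2 : List V}
    (hchar : ∀ x y, S x y ↔ S1 x y ∨ S2 x y ∨ (x ∈ L1 ∧ y ∈ L2) ∨ (x ∈ L2 ∧ y ∈ L1))
    (hm1 : ∀ {x y}, S1 x y → x ∈ L1 ∧ y ∈ L1) (hm2 : ∀ {x y}, S2 x y → x ∈ L2 ∧ y ∈ L2)
    (hd : ∀ x, x ∈ L1 → x ∈ L2 → False)
    (h1 : P4Free S1) (h2 : P4Free S2) : P4Free S := by
  rintro ⟨a, b, c, d, n1, n2, n3, n4, n5, n6, p1, p2, p3, q1, q2, q3⟩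
  have t1 : ∀ {x y}, ¬ S x y → ¬ S1 x y := fun hq h => hq ((hchar _ _).2 (Or.inl h))
  have t2 : ∀ {x y}, ¬ S x y → ¬ S2 x y := fun hq h => hq ((hchar _ _).2 (Or.inr (Or.inl h)))
  have mem : ∀ {x y}, S x y → (x ∈ L1 ∨ x ∈ L2) ∧ (y ∈ L1 ∨ y ∈ L2) := by
    intro x y h
    rcases (hchar x y).1 h with h | h | h | h
    · exact ⟨Or.inl (hm1 h).1, Or.inl (hm1 h).2⟩
    · exact ⟨Or.inr (hm2 h).1, Or.inr (hm2 h).2⟩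
    · exact ⟨Or.inl h.1, Or.inr h.2⟩
    · exact ⟨Or.inr h.1, Or.inl h.2⟩
  have ma := (mem p1).1
  have mb := (mem p1).2
  have mc := (mem p2).2
  have md := (mem p3).2
  have ss : ∀ {x y}, ¬ S x y → (x ∈ L1 ∨ x ∈ L2) → (y ∈ L1 ∨ y ∈ L2) →
      (x ∈ L1 ∧ y ∈ L1) ∨ (x ∈ L2 ∧ y ∈ L2) := by
    intro x y hxy mx my
    rcases mx with mx | mx
    · rcases my with my | my
      · exact Or.inl ⟨mx, my⟩
      · exact (hxy ((hchar x y).2 (Or.inr (Or.inr (Or.inl ⟨mx, my⟩))))).elim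
    · rcases my with my | my
      · exact (hxy ((hchar x y).2 (Or.inr (Or.inr (Or.inr ⟨mx, my⟩))))).elim
      · exact Or.inr ⟨mx, my⟩
  have red1 : ∀ {x y}, S x y → x ∈ L1 → y ∈ L1 → S1 x y := by
    intro x y h hx hy
    rcases (hchar x y).1 h with h | h | h | h
    · exact h
    · exact (hd x hx (hm2 h).1).elim
    · exact (hd y hy h.2).elim
    · exact (hd x hx h.1).elim
  have red2 : ∀ {x y}, S x y → x ∈ L2 → y ∈ L2 → S2 x y := by
    intro x y h hx hy
    rcases (hchar x y).1 h with h | h | h | h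
    · exact (hd x (hm1 h).1 hx).elim
    · exact h
    · exact (hd x h.1 hx).elim
    · exact (hd y h.2 hy).elim
  rcases ss q1 ma mc with ⟨a1, c1⟩ | ⟨a2, c2⟩
  · have d1 : d ∈ L1 := by
      rcases ss q2 ma md with ⟨_, h⟩ | ⟨h, _⟩
      · exact h
      · exact (hd a a1 h).elim
    have b1 : b ∈ L1 := by
      rcases ss q3 mb md with ⟨h, _⟩ | ⟨_, h⟩
      · exact h
      · exact (hd d d1 h).elim
    exact h1 ⟨a, b, c, d, n1, n2, n3, n4, n5, n6, red1 p1 a1 b1, red1 p2 b1 c1,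
      red1 p3 c1 d1, t1 q1, t1 q2, t1 q3⟩
  · have d2 : d ∈ L2 := by
      rcases ss q2 ma md with ⟨h, _⟩ | ⟨_, h⟩
      · exact (hd a h a2).elim
      · exact h
    have b2 : b ∈ L2 := by
      rcases ss q3 mb md with ⟨_, h⟩ | ⟨h, _⟩
      · exact (hd d h d2).elim
      · exact h
    exact h2 ⟨a, b, c, d, n1, n2, n3, n4, n5, n6, red2 p1 a2 b2, red2 p2 b2 c2,
      red2 p3 c2 d2, t2 q1, t2 q2, t2 q3⟩

end unions

namespace DTerm
variable {V : Type}

theorem good (T : DTerm V) (hnd : T.leaves.Nodup) :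
    WeaklyTransitive T.rel ∧ NFree (asymPart T.rel) ∧ P4Free (symPart T.rel) := by
  induction T with
  | leaf v =>
      refine ⟨fun a b c => ⟨fun h _ => h.1.elim, fun h _ => h.elim⟩, ?_, ?_⟩
      · rintro ⟨a, b, c, d, _, _, _, _, _, _, ⟨h, -⟩, -⟩
        exact h
      · rintro ⟨a, b, c, d, _, _, _, _, _, _, ⟨h, -⟩, -⟩
        exact h
  | par s t ihs iht =>
      have hnd' : s.leaves.Nodup ∧ t.leaves.Nodup ∧ s.leaves.Disjoint t.leaves := by
        obtain ⟨h1, h2, h3⟩ := List.nodup_append.mp hnd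
        exact ⟨h1, h2, fun ⦃x⦄ hx hy => h3 x hx x hy rfl⟩
      obtain ⟨hs, ht, hdj⟩ := hnd'
      have D : ∀ x : V, x ∈ s.leaves → x ∈ t.leaves → False := fun x hx hy => hdj hx hy
      obtain ⟨wts, nfs, pfs⟩ := ihs hs
      obtain ⟨wtt, nft, pft⟩ := iht ht
      refine ⟨?_, ?_, ?_⟩
      · intro a b c
        constructor
        · intro hA hR
          have hR' : s.rel b c ∨ t.rel b c := hR
          show s.rel a c ∨ t.rel a c
          rcases (asym_par_iff D).mp hA with h | h
          · rcases hR' with h' | h'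
            · exact Or.inl ((wts a b c).1 h h')
            · exact (D b (mem_of_rel s h.1).2 (mem_of_rel t h').1).elim
          · rcases hR' with h' | h'
            · exact (D b (mem_of_rel s h').1 (mem_of_rel t h.1).2).elim
            · exact Or.inr ((wtt a b c).1 h h')
        · intro hR hA
          have hR' : s.rel a b ∨ t.rel a b := hR
          show s.rel a c ∨ t.rel a c
          rcases (asym_par_iff D).mp hA with h | h
          · rcases hR' with h' | h'
            · exact Or.inl ((wts a b c).2 h' h)
            · exact (D b (mem_of_rel s h.1).1 (mem_of_rel t h').2).elim
          · rcases hR' with h' | h'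
            · exact (D b (mem_of_rel s h').2 (mem_of_rel t h.1).1).elim
            · exact Or.inr ((wtt a b c).2 h' h)
      · exact NFree.union (fun x y => asym_par_iff D)
          (fun h => mem_of_rel s h.1) (fun h => mem_of_rel t h.1) D nfs nft
      · exact P4Free.union (fun x y => sym_par_iff D)
          (fun h => mem_of_rel s h.1) (fun h => mem_of_rel t h.1) D pfs pft
  | tens s t ihs iht =>
      have hnd' : s.leaves.Nodup ∧ t.leaves.Nodup ∧ s.leaves.Disjoint t.leaves := by
        obtain ⟨h1, h2, h3⟩ := List.nodup_append.mp hnd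
        exact ⟨h1, h2, fun ⦃x⦄ hx hy => h3 x hx x hy rfl⟩
      obtain ⟨hs, ht, hdj⟩ := hnd'
      have D : ∀ x : V, x ∈ s.leaves → x ∈ t.leaves → False := fun x hx hy => hdj hx hy
      obtain ⟨wts, nfs, pfs⟩ := ihs hs
      obtain ⟨wtt, nft, pft⟩ := iht ht
      refine ⟨?_, ?_, ?_⟩
      · intro a b c
        constructor
        · intro hA hR
          have hR' : s.rel b c ∨ t.rel b c ∨ (b ∈ s.leaves ∧ c ∈ t.leaves) ∨
              (b ∈ t.leaves ∧ c ∈ s.leaves) := hR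
          show s.rel a c ∨ t.rel a c ∨ (a ∈ s.leaves ∧ c ∈ t.leaves) ∨
              (a ∈ t.leaves ∧ c ∈ s.leaves)
          rcases (asym_tens_iff D).mp hA with h | h
          · obtain ⟨ha, hb⟩ := mem_of_rel s h.1
            rcases hR' with h' | h' | ⟨h1, h2⟩ | ⟨h1, h2⟩
            · exact Or.inl ((wts a b c).1 h h')
            · exact (D b hb (mem_of_rel t h').1).elim
            · exact Or.inr (Or.inr (Or.inl ⟨ha, h2⟩))
            · exact (D b hb h1).elim
          · obtain ⟨ha, hb⟩ := mem_of_rel t h.1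
            rcases hR' with h' | h' | ⟨h1, h2⟩ | ⟨h1, h2⟩
            · exact (D b (mem_of_rel s h').1 hb).elim
            · exact Or.inr (Or.inl ((wtt a b c).1 h h'))
            · exact (D b h1 hb).elim
            · exact Or.inr (Or.inr (Or.inr ⟨ha, h2⟩))
        · intro hR hA
          have hR' : s.rel a b ∨ t.rel a b ∨ (a ∈ s.leaves ∧ b ∈ t.leaves) ∨
              (a ∈ t.leaves ∧ b ∈ s.leaves) := hR
          show s.rel a c ∨ t.rel a c ∨ (a ∈ s.leaves ∧ c ∈ t.leaves) ∨
              (a ∈ t.leaves ∧ c ∈ s.leaves)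
          rcases (asym_tens_iff D).mp hA with h | h
          · obtain ⟨hb, hc⟩ := mem_of_rel s h.1
            rcases hR' with h' | h' | ⟨h1, h2⟩ | ⟨h1, h2⟩
            · exact Or.inl ((wts a b c).2 h' h)
            · exact (D b hb (mem_of_rel t h').2).elim
            · exact (D b hb h2).elim
            · exact Or.inr (Or.inr (Or.inr ⟨h1, hc⟩))
          · obtain ⟨hb, hc⟩ := mem_of_rel t h.1
            rcases hR' with h' | h' | ⟨h1, h2⟩ | ⟨h1, h2⟩
            · exact (D b (mem_of_rel s h').2 hb).elim
            · exact Or.inr (Or.inl ((wtt a b c).2 h' h))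
            · exact Or.inr (Or.inr (Or.inl ⟨h1, hc⟩))
            · exact (D b h2 hb).elim
      · exact NFree.union (fun x y => asym_tens_iff D)
          (fun h => mem_of_rel s h.1) (fun h => mem_of_rel t h.1) D nfs nft
      · exact P4Free.tensUnion (fun x y => sym_tens_iff D)
          (fun h => mem_of_rel s h.1) (fun h => mem_of_rel t h.1) D pfs pft
  | seq s t ihs iht =>
      have hnd' : s.leaves.Nodup ∧ t.leaves.Nodup ∧ s.leaves.Disjoint t.leaves := by
        obtain ⟨h1, h2, h3⟩ := List.nodup_append.mp hnd
        exact ⟨h1, h2, fun ⦃x⦄ hx hy => h3 x hx x hy rfl⟩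
      obtain ⟨hs, ht, hdj⟩ := hnd'
      have D : ∀ x : V, x ∈ s.leaves → x ∈ t.leaves → False := fun x hx hy => hdj hx hy
      obtain ⟨wts, nfs, pfs⟩ := ihs hs
      obtain ⟨wtt, nft, pft⟩ := iht ht
      refine ⟨?_, ?_, ?_⟩
      · intro a b c
        constructor
        · intro hA hR
          have hR' : s.rel b c ∨ t.rel b c ∨ (b ∈ s.leaves ∧ c ∈ t.leaves) := hR
          show s.rel a c ∨ t.rel a c ∨ (a ∈ s.leaves ∧ c ∈ t.leaves)
          rcases (asym_seq_iff D).mp hA with h | h | ⟨ha, hb⟩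
          · obtain ⟨ha, hb⟩ := mem_of_rel s h.1
            rcases hR' with h' | h' | ⟨h1, h2⟩
            · exact Or.inl ((wts a b c).1 h h')
            · exact (D b hb (mem_of_rel t h').1).elim
            · exact Or.inr (Or.inr ⟨ha, h2⟩)
          · obtain ⟨ha, hb⟩ := mem_of_rel t h.1
            rcases hR' with h' | h' | ⟨h1, h2⟩
            · exact (D b (mem_of_rel s h').1 hb).elim
            · exact Or.inr (Or.inl ((wtt a b c).1 h h'))
            · exact (D b h1 hb).elim
          · rcases hR' with h' | h' | ⟨h1, h2⟩
            · exact (D b (mem_of_rel s h').1 hb).elim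
            · exact Or.inr (Or.inr ⟨ha, (mem_of_rel t h').2⟩)
            · exact (D b h1 hb).elim
        · intro hR hA
          have hR' : s.rel a b ∨ t.rel a b ∨ (a ∈ s.leaves ∧ b ∈ t.leaves) := hR
          show s.rel a c ∨ t.rel a c ∨ (a ∈ s.leaves ∧ c ∈ t.leaves)
          rcases (asym_seq_iff D).mp hA with h | h | ⟨hb, hc⟩
          · obtain ⟨hb, hc⟩ := mem_of_rel s h.1
            rcases hR' with h' | h' | ⟨h1, h2⟩
            · exact Or.inl ((wts a b c).2 h' h)
            · exact (D b hb (mem_of_rel t h').2).elim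
            · exact (D b hb h2).elim
          · obtain ⟨hb, hc⟩ := mem_of_rel t h.1
            rcases hR' with h' | h' | ⟨h1, h2⟩
            · exact (D b (mem_of_rel s h').2 hb).elim
            · exact Or.inr (Or.inl ((wtt a b c).2 h' h))
            · exact Or.inr (Or.inr ⟨h1, hc⟩)
          · rcases hR' with h' | h' | ⟨h1, h2⟩
            · exact Or.inr (Or.inr ⟨(mem_of_rel s h').1, hc⟩)
            · exact (D b hb (mem_of_rel t h').2).elim
            · exact (D b hb h2).elim
      · exact NFree.seqUnion (fun x y => asym_seq_iff D)
          (fun h => mem_of_rel s h.1) (fun h => mem_of_rel t h.1) D nfs nft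
      · exact P4Free.union (fun x y => sym_seq_iff D)
          (fun h => mem_of_rel s h.1) (fun h => mem_of_rel t h.1) D pfs pft

end DTerm

section Graph
variable {V : Type} [DecidableEq V]

def GReach (e : V → V → Prop) (s : Finset V) : V → V → Prop :=
  Relation.ReflTransGen (fun x y => x ∈ s ∧ y ∈ s ∧ e x y)

lemma GReach.refl {e : V → V → Prop} {s : Finset V} {a : V} : GReach e s a a :=
  Relation.ReflTransGen.refl

lemma GReach.single {e : V → V → Prop} {s : Finset V} {a b : V}
    (ha : a ∈ s) (hb : b ∈ s) (h : e a b) : GReach e s a b :=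
  Relation.ReflTransGen.single ⟨ha, hb, h⟩

lemma GReach.trans {e : V → V → Prop} {s : Finset V} {a b c : V}
    (h1 : GReach e s a b) (h2 : GReach e s b c) : GReach e s a c :=
  Relation.ReflTransGen.trans h1 h2

lemma GReach.head {e : V → V → Prop} {s : Finset V} {a b c : V}
    (ha : a ∈ s) (hb : b ∈ s) (h : e a b) (h2 : GReach e s b c) : GReach e s a c :=
  Relation.ReflTransGen.head ⟨ha, hb, h⟩ h2

lemma GReach.symm {e : V → V → Prop} (he : ∀ x y, e x y → e y x) {s : Finset V}
    {a b : V} (h : GReach e s a b) : GReach e s b a := by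
  induction h with
  | refl => exact GReach.refl
  | tail h1 h2 ih => exact GReach.head h2.2.1 h2.1 (he _ _ h2.2.2) ih

lemma GReach.firstStep {e : V → V → Prop} {s : Finset V} {a b : V}
    (h : GReach e s a b) (hne : a ≠ b) : ∃ c, c ∈ s ∧ e a c := by
  induction h using Relation.ReflTransGen.head_induction_on with
  | refl => exact absurd rfl hne
  | head h' _ _ => exact ⟨_, h'.2.1, h'.2.2⟩

lemma GReach.exit {e : V → V → Prop} {s : Finset V} {a b : V} (X : V → Prop)
    (h : GReach e s a b) (ha : X a) (hb : ¬ X b) :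
    ∃ x y, X x ∧ ¬ X y ∧ x ∈ s ∧ y ∈ s ∧ e x y ∧ GReach e s a x := by
  induction h using Relation.ReflTransGen.head_induction_on with
  | refl => exact absurd ha hb
  | @head p q h' hq ih =>
      by_cases hXq : X q
      · obtain ⟨x, y, h1, h2, h3, h4, h5, h6⟩ := ih hXq
        exact ⟨x, y, h1, h2, h3, h4, h5, GReach.head h'.1 h'.2.1 h'.2.2 h6⟩
      · exact ⟨p, q, ha, hXq, h'.1, h'.2.1, h'.2.2, GReach.refl⟩

lemma GReach.mono_erase {e : V → V → Prop} {s : Finset V} {v a b : V}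
    (h : GReach e (s.erase v) a b) : GReach e s a b := by
  induction h with
  | refl => exact GReach.refl
  | tail h1 h2 ih =>
      exact GReach.trans ih (GReach.single (Finset.mem_of_mem_erase h2.1)
        (Finset.mem_of_mem_erase h2.2.1) h2.2.2)

lemma GReach.throughV {e : V → V → Prop} {s : Finset V} {v a b : V}
    (h : GReach e s a b) (hb : b ≠ v) :
    (a = v → ∃ u, u ∈ s.erase v ∧ e v u ∧ GReach e (s.erase v) u b) ∧
    (a ≠ v → (GReach e (s.erase v) a b ∨ ∃ u1 u2, u1 ∈ s.erase v ∧ u2 ∈ s.erase v ∧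
       GReach e (s.erase v) a u1 ∧ e u1 v ∧ e v u2 ∧ GReach e (s.erase v) u2 b)) := by
  induction h using Relation.ReflTransGen.head_induction_on with
  | refl =>
      constructor
      · intro hav; exact (hb hav).elim
      · intro _; exact Or.inl GReach.refl
  | @head p q h' hq ih =>
      obtain ⟨hp, hqs, hpq⟩ := h'
      constructor
      · intro hpv
        by_cases hqv : q = v
        · exact ih.1 hqv
        · have hq' : q ∈ s.erase v := Finset.mem_erase.mpr ⟨hqv, hqs⟩
          rcases ih.2 hqv with h2 | ⟨u1, u2, m1, m2, r1, e1, e2, r2⟩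
          · exact ⟨q, hq', hpv ▸ hpq, h2⟩
          · exact ⟨u2, m2, e2, r2⟩
      · intro hpv
        have hp' : p ∈ s.erase v := Finset.mem_erase.mpr ⟨hpv, hp⟩
        by_cases hqv : q = v
        · obtain ⟨u, m, e2, r2⟩ := ih.1 hqv
          exact Or.inr ⟨p, u, hp', m, GReach.refl, hqv ▸ hpq, e2, r2⟩
        · have hq' : q ∈ s.erase v := Finset.mem_erase.mpr ⟨hqv, hqs⟩
          rcases ih.2 hqv with h2 | ⟨u1, u2, m1, m2, r1, e1, e2, r2⟩
          · exact Or.inl (GReach.head hp' hq' hpq h2)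
          · exact Or.inr ⟨u1, u2, m1, m2, GReach.head hp' hq' hpq r1, e1, e2, r2⟩

end Graph

section Core
set_option linter.unusedSectionVars false
variable {V : Type} [DecidableEq V] {R : V → V → Prop}

def Ue (R : V → V → Prop) : V → V → Prop := fun a b => R a b ∨ R b a
def Ne' (R : V → V → Prop) : V → V → Prop := fun a b => a ≠ b ∧ ¬(R a b ∧ R b a)
def Ke (R : V → V → Prop) : V → V → Prop :=
  fun a b => a ≠ b ∧ ¬asymPart R a b ∧ ¬asymPart R b a

lemma Ue.symm' : ∀ x y, Ue R x y → Ue R y x := fun _ _ h => h.symm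
lemma Ne'.symm' : ∀ x y, Ne' R x y → Ne' R y x :=
  fun _ _ h => ⟨h.1.symm, fun hh => h.2 ⟨hh.2, hh.1⟩⟩
lemma Ke.symm' : ∀ x y, Ke R x y → Ke R y x := fun _ _ h => ⟨h.1.symm, h.2.2, h.2.1⟩

variable (hirr : ∀ a, ¬ R a a) (hwt : WeaklyTransitive R)
include hirr hwt

lemma wt1 {a b c : V} (h : asymPart R a b) (h' : R b c) : R a c := (hwt a b c).1 h h'
lemma wt2 {a b c : V} (h : R a b) (h' : asymPart R b c) : R a c := (hwt a b c).2 h h'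
lemma ane {a b : V} (h : asymPart R a b) : a ≠ b := fun he => hirr b (he ▸ h.1)

lemma atrans {a b c : V} (h1 : asymPart R a b) (h2 : asymPart R b c) : asymPart R a c :=
  ⟨wt1 hirr hwt h1 h2.1, fun hca => h2.2 (wt2 hirr hwt hca h1)⟩

lemma L1s {x z c : V} (hKe : Ke R x z) (hA : asymPart R x c) :
    asymPart R z c ∨ Ke R z c := by
  by_cases h : asymPart R z c
  · exact Or.inl h
  · refine Or.inr ⟨?_, h, ?_⟩
    · rintro rfl; exact hKe.2.1 hA
    · intro hcz
      by_cases hr : R x z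
      · have hzx : R z x := by
          by_contra hzx
          exact hKe.2.1 ⟨hr, hzx⟩
        exact hA.2 (wt1 hirr hwt hcz hzx)
      · exact hKe.2.1 (atrans hirr hwt hA hcz)

lemma L1s' {x z c : V} (hKe : Ke R x z) (hA : asymPart R c x) :
    asymPart R c z ∨ Ke R z c := by
  by_cases h : asymPart R c z
  · exact Or.inl h
  · refine Or.inr ⟨?_, ?_, h⟩
    · rintro rfl; exact hKe.2.2 hA
    · intro hzc
      by_cases hr : R x z
      · have hzx : R z x := by
          by_contra hzx
          exact hKe.2.1 ⟨hr, hzx⟩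
        exact hA.2 (wt2 hirr hwt hr hzc)
      · exact hKe.2.2 (atrans hirr hwt hzc hA)

lemma KL2 {s : Finset V} {x y c : V} (h : GReach (Ke R) s x y)
    (hc : c ∈ s) : asymPart R x c → (asymPart R y c ∨ GReach (Ke R) s x c) := by
  induction h using Relation.ReflTransGen.head_induction_on with
  | refl => exact fun hA => Or.inl hA
  | @head p q h' hq ih =>
      intro hA
      obtain ⟨hp, hqs, hpq⟩ := h'
      rcases L1s hirr hwt hpq hA with h2 | h2
      · rcases ih h2 with h3 | h3
        · exact Or.inl h3
        · exact Or.inr (GReach.head hp hqs hpq h3)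
      · exact Or.inr (GReach.head hp hqs hpq (GReach.single hqs hc h2))

lemma KL2' {s : Finset V} {x y c : V} (h : GReach (Ke R) s x y)
    (hc : c ∈ s) : asymPart R c x → (asymPart R c y ∨ GReach (Ke R) s x c) := by
  induction h using Relation.ReflTransGen.head_induction_on with
  | refl => exact fun hA => Or.inl hA
  | @head p q h' hq ih =>
      intro hA
      obtain ⟨hp, hqs, hpq⟩ := h'
      rcases L1s' hirr hwt hpq hA with h2 | h2
      · rcases ih h2 with h3 | h3
        · exact Or.inl h3
        · exact Or.inr (GReach.head hp hqs hpq h3)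
      · exact Or.inr (GReach.head hp hqs hpq (GReach.single hqs hc h2))

end Core

section Core2
set_option linter.unusedSectionVars false
variable {V : Type} [DecidableEq V] {R : V → V → Prop}
variable (hirr : ∀ a, ¬ R a a) (hwt : WeaklyTransitive R)
variable (hnf : NFree (asymPart R)) (hpf : P4Free (symPart R))
include hirr hwt hnf hpf

lemma caseU {s : Finset V} {v : V} (hv : v ∈ s)
    (htU : ∀ a ∈ s, ∀ b ∈ s, GReach (Ue R) s a b)
    (htN : ∀ a ∈ s, ∀ b ∈ s, GReach (Ne' R) s a b)
    (htK : ∀ a ∈ s, ∀ b ∈ s, GReach (Ke R) s a b)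
    {a b : V} (ha : a ∈ s.erase v) (hb : b ∈ s.erase v)
    (hnr : ¬ GReach (Ue R) (s.erase v) a b) : False := by
  classical
  set s' := s.erase v with hs'def
  have hmem : ∀ {x : V}, x ∈ s' → x ∈ s ∧ x ≠ v := fun hx =>
    ⟨Finset.mem_of_mem_erase hx, (Finset.mem_erase.mp hx).1⟩
  have hmem' : ∀ {x : V}, x ∈ s → x ≠ v → x ∈ s' := fun hx hxv =>
    Finset.mem_erase.mpr ⟨hxv, hx⟩
  have hUsym : ∀ {x y : V}, GReach (Ue R) s' x y → GReach (Ue R) s' y x :=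
    fun h => GReach.symm (Ue.symm' (R := R)) h
  obtain ⟨uA, uB, hmA, hmB, hrA, heA, heB, hrB⟩ :
      ∃ u1 u2, u1 ∈ s' ∧ u2 ∈ s' ∧ GReach (Ue R) s' a u1 ∧ Ue R u1 v ∧ Ue R v u2 ∧
        GReach (Ue R) s' u2 b := by
    have h := htU a (hmem ha).1 b (hmem hb).1
    rcases (GReach.throughV h (hmem hb).2).2 (hmem ha).2 with h' | h'
    · exact (hnr h').elim
    · exact h'
  have hnAB : ¬ GReach (Ue R) s' uA uB := fun h => hnr (hrA.trans (h.trans hrB))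
  have nreach_one : ∀ u : V, (¬ GReach (Ue R) s' uA u) ∨ (¬ GReach (Ue R) s' uB u) := by
    intro u
    by_cases h : GReach (Ue R) s' uA u
    · exact Or.inr (fun h' => hnAB (h.trans (hUsym h')))
    · exact Or.inl h
  have hne_diag : ∀ {x y : V}, ¬ GReach (Ue R) s' x y → x ≠ y := by
    rintro x y hn rfl; exact hn GReach.refl
  have nrel : ∀ {x y : V}, x ∈ s' → y ∈ s' → ¬ GReach (Ue R) s' x y →
      ¬ R x y ∧ ¬ R y x := fun hx hy hn =>
    ⟨fun h => hn (GReach.single hx hy (Or.inl h)),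
     fun h => hn (GReach.single hx hy (Or.inr h))⟩
  have tc1 : ∀ {p q : V}, p ∈ s' → q ∈ s' → Ue R v q → ¬ GReach (Ue R) s' p q →
      asymPart R p v → asymPart R q v := by
    intro p q hp hq hUq hnpq hApv
    have hnone := nrel hp hq hnpq
    have hnvq : ¬ R v q := fun h => hnone.1 (wt1 hirr hwt hApv h)
    rcases hUq with h | h
    · exact (hnvq h).elim
    · exact ⟨h, hnvq⟩
  have tc2 : ∀ {p q : V}, p ∈ s' → q ∈ s' → Ue R v q → ¬ GReach (Ue R) s' p q →
      asymPart R v p → asymPart R v q := by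
    intro p q hp hq hUq hnpq hAvp
    have hnone := nrel hp hq hnpq
    have hnqv : ¬ R q v := fun h => hnone.2 (wt2 hirr hwt h hAvp)
    rcases hUq with h | h
    · exact ⟨h, hnqv⟩
    · exact (hnqv h).elim
  have hUvA : Ue R v uA := Ue.symm' _ _ heA
  have hUvB : Ue R v uB := heB
  have throughz : ∀ {z0 : V}, z0 ∈ s' →
      ∃ p, p ∈ s' ∧ Ue R v p ∧ GReach (Ue R) s' p z0 := by
    intro z0 hz0
    have h := htU uA (hmem hmA).1 z0 (hmem hz0).1
    rcases (GReach.throughV h (hmem hz0).2).2 (hmem hmA).2 with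
      h' | ⟨w1, w2, m1, m2, r1, e1, e2, r2⟩
    · exact ⟨uA, hmA, hUvA, h'⟩
    · exact ⟨w2, m2, e2, r2⟩
  by_cases hA1 : asymPart R v uA
  · -- all Ue-neighbours of v get arcs from v
    have allA : ∀ u ∈ s', Ue R v u → asymPart R v u := by
      intro u hu hUu
      rcases nreach_one u with h | h
      · exact tc2 hmA hu hUu h hA1
      · exact tc2 hmB hu hUu h (tc2 hmA hmB hUvB hnAB hA1)
    by_cases hall : ∀ z ∈ s', Ue R v z
    · obtain ⟨c, hcs, hKc⟩ := GReach.firstStep (htK v hv uA (hmem hmA).1)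
        (fun he => (hmem hmA).2 he.symm)
      have hcv : c ≠ v := fun he => hKc.1 he.symm
      exact hKc.2.1 (allA c (hmem' hcs hcv) (hall c (hmem' hcs hcv)))
    · push_neg at hall
      obtain ⟨z0, hz0, hnUz0⟩ := hall
      obtain ⟨p, hps, hUp, hrpz⟩ := throughz hz0
      have hXz0 : ¬ (fun x => Ue R v x) z0 := hnUz0
      obtain ⟨y, z, hXy, hXz, hys, hzs, hUyz, _⟩ :=
        GReach.exit (fun x => Ue R v x) hrpz hUp hXz0
      have hAvy : asymPart R v y := allA y hys hXy
      have noneVZ : ¬ R v z ∧ ¬ R z v := ⟨fun h => hXz (Or.inl h), fun h => hXz (Or.inr h)⟩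
      obtain ⟨w, hws, hUw, hnwy⟩ : ∃ w, w ∈ s' ∧ Ue R v w ∧ ¬ GReach (Ue R) s' w y := by
        rcases nreach_one y with h | h
        · exact ⟨uA, hmA, hUvA, h⟩
        · exact ⟨uB, hmB, hUvB, h⟩
      have hAvw : asymPart R v w := allA w hws hUw
      have noneWY := nrel hws hys hnwy
      have hnwz : ¬ GReach (Ue R) s' w z := fun h =>
        hnwy (h.trans (GReach.single hzs hys (Ue.symm' _ _ hUyz)))
      have noneWZ := nrel hws hzs hnwz
      have hnyz : ¬ R y z := fun h => noneVZ.1 (wt1 hirr hwt hAvy h)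
      have hAzy : asymPart R z y := by
        rcases hUyz with h | h
        · exact (hnyz h).elim
        · exact ⟨h, hnyz⟩
      exact hnf ⟨z, v, y, w, (hmem hzs).2, ane hirr hwt hAzy, (hne_diag hnwz).symm,
        ((hmem hys).2).symm, ((hmem hws).2).symm, hne_diag hnwy |>.symm |> fun hyw => hyw,
        hAzy, hAvy, hAvw,
        fun h => noneVZ.2 h.1, fun h => noneVZ.1 h.1,
        fun h => noneWZ.2 h.1, fun h => noneWZ.1 h.1,
        fun h => noneWY.2 h.1, fun h => noneWY.1 h.1,
        fun h => hnyz h.1, fun h => hAvy.2 h.1, fun h => hAvw.2 h.1⟩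
  · by_cases hA2 : asymPart R uA v
    · -- all Ue-neighbours of v get arcs to v
      have allA' : ∀ u ∈ s', Ue R v u → asymPart R u v := by
        intro u hu hUu
        rcases nreach_one u with h | h
        · exact tc1 hmA hu hUu h hA2
        · exact tc1 hmB hu hUu h (tc1 hmA hmB hUvB hnAB hA2)
      by_cases hall : ∀ z ∈ s', Ue R v z
      · obtain ⟨c, hcs, hKc⟩ := GReach.firstStep (htK v hv uA (hmem hmA).1)
          (fun he => (hmem hmA).2 he.symm)
        have hcv : c ≠ v := fun he => hKc.1 he.symm
        exact hKc.2.2 (allA' c (hmem' hcs hcv) (hall c (hmem' hcs hcv)))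
      · push_neg at hall
        obtain ⟨z0, hz0, hnUz0⟩ := hall
        obtain ⟨p, hps, hUp, hrpz⟩ := throughz hz0
        obtain ⟨y, z, hXy, hXz, hys, hzs, hUyz, _⟩ :=
          GReach.exit (fun x => Ue R v x) hrpz hUp hnUz0
        have hAyv : asymPart R y v := allA' y hys hXy
        have noneVZ : ¬ R v z ∧ ¬ R z v := ⟨fun h => hXz (Or.inl h), fun h => hXz (Or.inr h)⟩
        obtain ⟨w, hws, hUw, hnwy⟩ : ∃ w, w ∈ s' ∧ Ue R v w ∧ ¬ GReach (Ue R) s' w y := by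
          rcases nreach_one y with h | h
          · exact ⟨uA, hmA, hUvA, h⟩
          · exact ⟨uB, hmB, hUvB, h⟩
        have hAwv : asymPart R w v := allA' w hws hUw
        have noneWY := nrel hws hys hnwy
        have hnwz : ¬ GReach (Ue R) s' w z := fun h =>
          hnwy (h.trans (GReach.single hzs hys (Ue.symm' _ _ hUyz)))
        have noneWZ := nrel hws hzs hnwz
        have hnzy : ¬ R z y := fun h => noneVZ.2 (wt2 hirr hwt h hAyv)
        have hAyz : asymPart R y z := by
          rcases hUyz with h | h
          · exact ⟨h, hnzy⟩
          · exact (hnzy h).elim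
        exact hnf ⟨w, y, v, z, hne_diag hnwy, (hmem hws).2, hne_diag hnwz,
          (hmem hys).2, ane hirr hwt hAyz, fun he => (hmem hzs).2 he.symm,
          hAwv, hAyv, hAyz,
          fun h => noneWY.1 h.1, fun h => noneWY.2 h.1,
          fun h => noneWZ.1 h.1, fun h => noneWZ.2 h.1,
          fun h => noneVZ.1 h.1, fun h => noneVZ.2 h.1,
          fun h => hAwv.2 h.1, fun h => hAyv.2 h.1, fun h => hnzy h.1⟩
    · -- symmetric case
      have hS : symPart R v uA := by
        rcases hUvA with h | h
        · exact ⟨h, by_contra fun hn => hA1 ⟨h, hn⟩⟩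
        · exact ⟨by_contra fun hn => hA2 ⟨h, hn⟩, h⟩
      have step : ∀ {p q : V}, p ∈ s' → q ∈ s' → Ue R v p → Ue R v q →
          ¬ GReach (Ue R) s' p q → symPart R v p → symPart R v q := by
        intro p q hp hq hUp hUq hnpq hSp
        have h1 : ¬ asymPart R q v :=
          fun h => (tc1 hq hp hUp (fun hr => hnpq (hUsym hr)) h).2 hSp.1
        have h2 : ¬ asymPart R v q :=
          fun h => (tc2 hq hp hUp (fun hr => hnpq (hUsym hr)) h).2 hSp.2
        rcases hUq with h | h
        · exact ⟨h, by_contra fun hn => h2 ⟨h, hn⟩⟩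
        · exact ⟨by_contra fun hn => h1 ⟨h, hn⟩, h⟩
      have allS : ∀ u ∈ s', Ue R v u → symPart R v u := by
        intro u hu hUu
        rcases nreach_one u with h | h
        · exact step hmA hu hUvA hUu h hS
        · exact step hmB hu hUvB hUu h (step hmA hmB hUvA hUvB hnAB hS)
      obtain ⟨z0, hz0s, hNz0⟩ := GReach.firstStep (htN v hv uA (hmem hmA).1)
        (fun he => (hmem hmA).2 he.symm)
      have hz0v : z0 ≠ v := fun he => hNz0.1 he.symm
      have hz0s' : z0 ∈ s' := hmem' hz0s hz0v
      have hnUvz0 : ¬ Ue R v z0 := fun h => hNz0.2 ⟨(allS z0 hz0s' h).1, (allS z0 hz0s' h).2⟩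
      obtain ⟨p, hps, hUp, hrpz⟩ := throughz hz0s'
      obtain ⟨y, z, hXy, hXz, hys, hzs, hUyz, _⟩ :=
        GReach.exit (fun x => Ue R v x) hrpz hUp hnUvz0
      have hSy : symPart R v y := allS y hys hXy
      have noneVZ : ¬ R v z ∧ ¬ R z v := ⟨fun h => hXz (Or.inl h), fun h => hXz (Or.inr h)⟩
      obtain ⟨w, hws, hUw, hnwy⟩ : ∃ w, w ∈ s' ∧ Ue R v w ∧ ¬ GReach (Ue R) s' w y := by
        rcases nreach_one y with h | h
        · exact ⟨uA, hmA, hUvA, h⟩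
        · exact ⟨uB, hmB, hUvB, h⟩
      have hSw : symPart R v w := allS w hws hUw
      have noneWY := nrel hws hys hnwy
      have hnwz : ¬ GReach (Ue R) s' w z := fun h =>
        hnwy (h.trans (GReach.single hzs hys (Ue.symm' _ _ hUyz)))
      have noneWZ := nrel hws hzs hnwz
      have hSyz : symPart R y z := by
        have k1 : ¬ asymPart R y z := fun h => noneVZ.1 (wt2 hirr hwt hSy.1 h)
        have k2 : ¬ asymPart R z y := fun h => noneVZ.2 (wt1 hirr hwt h hSy.2)
        rcases hUyz with h | h
        · exact ⟨h, by_contra fun hn => k1 ⟨h, hn⟩⟩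
        · exact ⟨by_contra fun hn => k2 ⟨h, hn⟩, h⟩
      refine hpf ⟨w, v, y, z, (hmem hws).2, hne_diag hnwy, hne_diag hnwz,
        ((hmem hys).2).symm, ((hmem hzs).2).symm, ?_,
        ⟨hSw.2, hSw.1⟩, hSy, hSyz,
        fun h => noneWY.1 h.1, fun h => noneWZ.1 h.1, fun h => noneVZ.1 h.1⟩
      rintro rfl
      exact hXz hXy

end Core2

section Core3
set_option linter.unusedSectionVars false
variable {V : Type} [DecidableEq V] {R : V → V → Prop}
variable (hirr : ∀ a, ¬ R a a) (hwt : WeaklyTransitive R)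
variable (hnf : NFree (asymPart R)) (hpf : P4Free (symPart R))
include hirr hwt hnf hpf

lemma caseN {s : Finset V} {v : V} (hv : v ∈ s)
    (htU : ∀ a ∈ s, ∀ b ∈ s, GReach (Ue R) s a b)
    (htN : ∀ a ∈ s, ∀ b ∈ s, GReach (Ne' R) s a b)
    (htK : ∀ a ∈ s, ∀ b ∈ s, GReach (Ke R) s a b)
    {a b : V} (ha : a ∈ s.erase v) (hb : b ∈ s.erase v)
    (hnr : ¬ GReach (Ne' R) (s.erase v) a b) : False := by
  classical
  set s' := s.erase v with hs'def
  have hmem : ∀ {x : V}, x ∈ s' → x ∈ s ∧ x ≠ v := fun hx =>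
    ⟨Finset.mem_of_mem_erase hx, (Finset.mem_erase.mp hx).1⟩
  have hmem' : ∀ {x : V}, x ∈ s → x ≠ v → x ∈ s' := fun hx hxv =>
    Finset.mem_erase.mpr ⟨hxv, hx⟩
  have hNsym : ∀ {x y : V}, GReach (Ne' R) s' x y → GReach (Ne' R) s' y x :=
    fun h => GReach.symm (Ne'.symm' (R := R)) h
  obtain ⟨uA, uB, hmA, hmB, hrA, heA, heB, hrB⟩ :
      ∃ u1 u2, u1 ∈ s' ∧ u2 ∈ s' ∧ GReach (Ne' R) s' a u1 ∧ Ne' R u1 v ∧ Ne' R v u2 ∧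
        GReach (Ne' R) s' u2 b := by
    have h := htN a (hmem ha).1 b (hmem hb).1
    rcases (GReach.throughV h (hmem hb).2).2 (hmem ha).2 with h' | h'
    · exact (hnr h').elim
    · exact h'
  have hnAB : ¬ GReach (Ne' R) s' uA uB := fun h => hnr (hrA.trans (h.trans hrB))
  have nreach_one : ∀ u : V, (¬ GReach (Ne' R) s' uA u) ∨ (¬ GReach (Ne' R) s' uB u) := by
    intro u
    by_cases h : GReach (Ne' R) s' uA u
    · exact Or.inr (fun h' => hnAB (h.trans (hNsym h')))
    · exact Or.inl h
  have hne_diag : ∀ {x y : V}, ¬ GReach (Ne' R) s' x y → x ≠ y := by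
    rintro x y hn rfl; exact hn GReach.refl
  have nrelN : ∀ {x y : V}, x ∈ s' → y ∈ s' → ¬ GReach (Ne' R) s' x y →
      symPart R x y := by
    intro x y hx hy hn
    have hne : x ≠ y := hne_diag hn
    by_contra hnS
    exact hn (GReach.single hx hy ⟨hne, hnS⟩)
  have hNvA : Ne' R v uA := Ne'.symm' _ _ heA
  have hNvB : Ne' R v uB := heB
  have tc1 : ∀ {p q : V}, p ∈ s' → q ∈ s' → Ne' R v q → ¬ GReach (Ne' R) s' p q →
      asymPart R p v → asymPart R q v := by
    intro p q hp hq hNq hnpq hApv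
    have hS := nrelN hp hq hnpq
    have hRqv : R q v := wt2 hirr hwt hS.2 hApv
    exact ⟨hRqv, fun hvq => hNq.2 ⟨hvq, hRqv⟩⟩
  have tc2 : ∀ {p q : V}, p ∈ s' → q ∈ s' → Ne' R v q → ¬ GReach (Ne' R) s' p q →
      asymPart R v p → asymPart R v q := by
    intro p q hp hq hNq hnpq hAvp
    have hS := nrelN hp hq hnpq
    have hRvq : R v q := wt1 hirr hwt hAvp hS.1
    exact ⟨hRvq, fun hqv => hNq.2 ⟨hRvq, hqv⟩⟩
  have tc3 : ∀ {p q : V}, p ∈ s' → q ∈ s' → Ne' R v q → ¬ GReach (Ne' R) s' p q →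
      (¬ R v p ∧ ¬ R p v) → (¬ R v q ∧ ¬ R q v) := by
    intro p q hp hq hNq hnpq hnone
    have hS := nrelN hp hq hnpq
    have hnvq : ¬ R v q := by
      intro h
      have hnqv : ¬ R q v := fun h2 => hNq.2 ⟨h, h2⟩
      exact hnone.1 (wt1 hirr hwt ⟨h, hnqv⟩ hS.2)
    refine ⟨hnvq, fun h => ?_⟩
    exact hnone.2 (wt2 hirr hwt hS.1 ⟨h, hnvq⟩)
  have throughz : ∀ {z0 : V}, z0 ∈ s' →
      ∃ p, p ∈ s' ∧ Ne' R v p ∧ GReach (Ne' R) s' p z0 := by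
    intro z0 hz0
    have h := htN uA (hmem hmA).1 z0 (hmem hz0).1
    rcases (GReach.throughV h (hmem hz0).2).2 (hmem hmA).2 with
      h' | ⟨w1, w2, m1, m2, r1, e1, e2, r2⟩
    · exact ⟨uA, hmA, hNvA, h'⟩
    · exact ⟨w2, m2, e2, r2⟩
  have getSvz : ∀ {z : V}, z ∈ s' → ¬ Ne' R v z → symPart R v z := by
    intro z hz hn
    by_contra hnS
    exact hn ⟨fun he => (hmem hz).2 he.symm, hnS⟩
  by_cases hA1 : asymPart R v uA
  · have allA : ∀ u ∈ s', Ne' R v u → asymPart R v u := by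
      intro u hu hNu
      rcases nreach_one u with h | h
      · exact tc2 hmA hu hNu h hA1
      · exact tc2 hmB hu hNu h (tc2 hmA hmB hNvB hnAB hA1)
    by_cases hall : ∀ z ∈ s', Ne' R v z
    · obtain ⟨c, hcs, hKc⟩ := GReach.firstStep (htK v hv uA (hmem hmA).1)
        (fun he => (hmem hmA).2 he.symm)
      have hcv : c ≠ v := fun he => hKc.1 he.symm
      exact hKc.2.1 (allA c (hmem' hcs hcv) (hall c (hmem' hcs hcv)))
    · push_neg at hall
      obtain ⟨z0, hz0, hnNz0⟩ := hall
      obtain ⟨p, hps, hNp, hrpz⟩ := throughz hz0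
      obtain ⟨y, z, hXy, hXz, hys, hzs, hNyz, _⟩ :=
        GReach.exit (fun x => Ne' R v x) hrpz hNp hnNz0
      have hAvy : asymPart R v y := allA y hys hXy
      have hSvz : symPart R v z := getSvz hzs hXz
      obtain ⟨w, hws, hNw, hnwy⟩ : ∃ w, w ∈ s' ∧ Ne' R v w ∧ ¬ GReach (Ne' R) s' w y := by
        rcases nreach_one y with h | h
        · exact ⟨uA, hmA, hNvA, h⟩
        · exact ⟨uB, hmB, hNvB, h⟩
      have hAvw : asymPart R v w := allA w hws hNw
      have hSwy : symPart R w y := nrelN hws hys hnwy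
      have hnwz : ¬ GReach (Ne' R) s' w z := fun h =>
        hnwy (h.trans (GReach.single hzs hys (Ne'.symm' _ _ hNyz)))
      have hSwz : symPart R w z := nrelN hws hzs hnwz
      exact hpf ⟨v, z, w, y, ((hmem hzs).2).symm, ((hmem hws).2).symm, ((hmem hys).2).symm,
        (hne_diag hnwz).symm, hNyz.1.symm, (hne_diag hnwy),
        hSvz, ⟨hSwz.2, hSwz.1⟩, hSwy,
        fun h => hAvw.2 h.2, fun h => hAvy.2 h.2, fun h => hNyz.2 ⟨h.2, h.1⟩⟩
  · by_cases hA2 : asymPart R uA v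
    · have allA' : ∀ u ∈ s', Ne' R v u → asymPart R u v := by
        intro u hu hNu
        rcases nreach_one u with h | h
        · exact tc1 hmA hu hNu h hA2
        · exact tc1 hmB hu hNu h (tc1 hmA hmB hNvB hnAB hA2)
      by_cases hall : ∀ z ∈ s', Ne' R v z
      · obtain ⟨c, hcs, hKc⟩ := GReach.firstStep (htK v hv uA (hmem hmA).1)
          (fun he => (hmem hmA).2 he.symm)
        have hcv : c ≠ v := fun he => hKc.1 he.symm
        exact hKc.2.2 (allA' c (hmem' hcs hcv) (hall c (hmem' hcs hcv)))
      · push_neg at hall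
        obtain ⟨z0, hz0, hnNz0⟩ := hall
        obtain ⟨p, hps, hNp, hrpz⟩ := throughz hz0
        obtain ⟨y, z, hXy, hXz, hys, hzs, hNyz, _⟩ :=
          GReach.exit (fun x => Ne' R v x) hrpz hNp hnNz0
        have hAyv : asymPart R y v := allA' y hys hXy
        have hSvz : symPart R v z := getSvz hzs hXz
        obtain ⟨w, hws, hNw, hnwy⟩ : ∃ w, w ∈ s' ∧ Ne' R v w ∧ ¬ GReach (Ne' R) s' w y := by
          rcases nreach_one y with h | h
          · exact ⟨uA, hmA, hNvA, h⟩
          · exact ⟨uB, hmB, hNvB, h⟩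
        have hAwv : asymPart R w v := allA' w hws hNw
        have hSwy : symPart R w y := nrelN hws hys hnwy
        have hnwz : ¬ GReach (Ne' R) s' w z := fun h =>
          hnwy (h.trans (GReach.single hzs hys (Ne'.symm' _ _ hNyz)))
        have hSwz : symPart R w z := nrelN hws hzs hnwz
        exact hpf ⟨v, z, w, y, ((hmem hzs).2).symm, ((hmem hws).2).symm, ((hmem hys).2).symm,
          (hne_diag hnwz).symm, hNyz.1.symm, (hne_diag hnwy),
          hSvz, ⟨hSwz.2, hSwz.1⟩, hSwy,
          fun h => hAwv.2 h.1, fun h => hAyv.2 h.1, fun h => hNyz.2 ⟨h.2, h.1⟩⟩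
    · -- none between v and uA
      have hnoneA : ¬ R v uA ∧ ¬ R uA v := by
        constructor
        · intro h
          have h2 : R uA v := by_contra fun hn => hA1 ⟨h, hn⟩
          exact hNvA.2 ⟨h, h2⟩
        · intro h
          have h2 : R v uA := by_contra fun hn => hA2 ⟨h, hn⟩
          exact hNvA.2 ⟨h2, h⟩
      have allNone : ∀ u ∈ s', Ne' R v u → (¬ R v u ∧ ¬ R u v) := by
        intro u hu hNu
        rcases nreach_one u with h | h
        · exact tc3 hmA hu hNu h hnoneA
        · exact tc3 hmB hu hNu h (tc3 hmA hmB hNvB hnAB hnoneA)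
      obtain ⟨z0, hz0s, hUz0⟩ := GReach.firstStep (htU v hv uA (hmem hmA).1)
        (fun he => (hmem hmA).2 he.symm)
      have hz0v : z0 ≠ v := by
        rintro rfl
        rcases hUz0 with h | h <;> exact hirr _ h
      have hz0s' : z0 ∈ s' := hmem' hz0s hz0v
      have hnNvz0 : ¬ Ne' R v z0 := by
        intro h
        rcases hUz0 with h' | h'
        · exact (allNone z0 hz0s' h).1 h'
        · exact (allNone z0 hz0s' h).2 h'
      obtain ⟨p, hps, hNp, hrpz⟩ := throughz hz0s'
      obtain ⟨y, z, hXy, hXz, hys, hzs, hNyz, _⟩ :=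
        GReach.exit (fun x => Ne' R v x) hrpz hNp hnNvz0
      have noneVY : ¬ R v y ∧ ¬ R y v := allNone y hys hXy
      have hSvz : symPart R v z := getSvz hzs hXz
      obtain ⟨w, hws, hNw, hnwy⟩ : ∃ w, w ∈ s' ∧ Ne' R v w ∧ ¬ GReach (Ne' R) s' w y := by
        rcases nreach_one y with h | h
        · exact ⟨uA, hmA, hNvA, h⟩
        · exact ⟨uB, hmB, hNvB, h⟩
      have noneVW : ¬ R v w ∧ ¬ R w v := allNone w hws hNw
      have hSwy : symPart R w y := nrelN hws hys hnwy
      have hnwz : ¬ GReach (Ne' R) s' w z := fun h =>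
        hnwy (h.trans (GReach.single hzs hys (Ne'.symm' _ _ hNyz)))
      have hSwz : symPart R w z := nrelN hws hzs hnwz
      exact hpf ⟨v, z, w, y, ((hmem hzs).2).symm, ((hmem hws).2).symm, ((hmem hys).2).symm,
        (hne_diag hnwz).symm, hNyz.1.symm, (hne_diag hnwy),
        hSvz, ⟨hSwz.2, hSwz.1⟩, hSwy,
        fun h => noneVW.1 h.1, fun h => noneVY.1 h.1, fun h => hNyz.2 ⟨h.2, h.1⟩⟩

end Core3

section Core4
set_option linter.unusedSectionVars false
variable {V : Type} [DecidableEq V] {R : V → V → Prop}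
variable (hirr : ∀ a, ¬ R a a) (hwt : WeaklyTransitive R)
variable (hnf : NFree (asymPart R)) (hpf : P4Free (symPart R))
include hirr hwt hnf hpf

lemma caseK {s : Finset V} {v : V} (hv : v ∈ s)
    (htU : ∀ a ∈ s, ∀ b ∈ s, GReach (Ue R) s a b)
    (htN : ∀ a ∈ s, ∀ b ∈ s, GReach (Ne' R) s a b)
    (htK : ∀ a ∈ s, ∀ b ∈ s, GReach (Ke R) s a b)
    {a b : V} (ha : a ∈ s.erase v) (hb : b ∈ s.erase v)
    (hnr : ¬ GReach (Ke R) (s.erase v) a b) : False := by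
  classical
  set s' := s.erase v with hs'def
  have hmem : ∀ {x : V}, x ∈ s' → x ∈ s ∧ x ≠ v := fun hx =>
    ⟨Finset.mem_of_mem_erase hx, (Finset.mem_erase.mp hx).1⟩
  have hmem' : ∀ {x : V}, x ∈ s → x ≠ v → x ∈ s' := fun hx hxv =>
    Finset.mem_erase.mpr ⟨hxv, hx⟩
  have hKsym : ∀ {x y : V}, GReach (Ke R) s' x y → GReach (Ke R) s' y x :=
    fun h => GReach.symm (Ke.symm' (R := R)) h
  obtain ⟨uA, uB, hmA, hmB, hrA, heA, heB, hrB⟩ :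
      ∃ u1 u2, u1 ∈ s' ∧ u2 ∈ s' ∧ GReach (Ke R) s' a u1 ∧ Ke R u1 v ∧ Ke R v u2 ∧
        GReach (Ke R) s' u2 b := by
    have h := htK a (hmem ha).1 b (hmem hb).1
    rcases (GReach.throughV h (hmem hb).2).2 (hmem ha).2 with h' | h'
    · exact (hnr h').elim
    · exact h'
  have hnAB : ¬ GReach (Ke R) s' uA uB := fun h => hnr (hrA.trans (h.trans hrB))
  have nreach_one : ∀ u : V, (¬ GReach (Ke R) s' uA u) ∨ (¬ GReach (Ke R) s' uB u) := by
    intro u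
    by_cases h : GReach (Ke R) s' uA u
    · exact Or.inr (fun h' => hnAB (h.trans (hKsym h')))
    · exact Or.inl h
  have hne_diag : ∀ {x y : V}, ¬ GReach (Ke R) s' x y → x ≠ y := by
    rintro x y hn rfl; exact hn GReach.refl
  have nrelK : ∀ {x y : V}, x ∈ s' → y ∈ s' → ¬ GReach (Ke R) s' x y →
      asymPart R x y ∨ asymPart R y x := by
    intro x y hx hy hn
    by_cases h1 : asymPart R x y
    · exact Or.inl h1
    · by_cases h2 : asymPart R y x
      · exact Or.inr h2
      · exact (hn (GReach.single hx hy ⟨hne_diag hn, h1, h2⟩)).elim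
  have hKvA : Ke R v uA := Ke.symm' _ _ heA
  have hKvB : Ke R v uB := heB
  by_cases hallK : ∀ z ∈ s', ¬ asymPart R v z ∧ ¬ asymPart R z v
  · have tcK : ∀ {p q : V}, p ∈ s' → q ∈ s' → ¬ GReach (Ke R) s' p q →
        (symPart R v p → symPart R v q) ∧
        ((¬ R v p ∧ ¬ R p v) → (¬ R v q ∧ ¬ R q v)) := by
      intro p q hp hq hnpq
      have hKq := hallK q hq
      constructor
      · intro hSp
        rcases nrelK hp hq hnpq with hA | hA
        · have hRvq : R v q := wt2 hirr hwt hSp.1 hA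
          exact ⟨hRvq, by_contra fun hn => hKq.1 ⟨hRvq, hn⟩⟩
        · have hRqv : R q v := wt1 hirr hwt hA hSp.2
          exact ⟨by_contra fun hn => hKq.2 ⟨hRqv, hn⟩, hRqv⟩
      · intro hnone
        rcases nrelK hp hq hnpq with hA | hA
        · have hnqv : ¬ R q v := fun h => hnone.2 (wt1 hirr hwt hA h)
          exact ⟨fun h => hKq.1 ⟨h, hnqv⟩, hnqv⟩
        · have hnvq : ¬ R v q := fun h => hnone.1 (wt2 hirr hwt h hA)
          exact ⟨hnvq, fun h => hKq.2 ⟨h, hnvq⟩⟩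
    by_cases hSA : symPart R v uA
    · have allS : ∀ u ∈ s', symPart R v u := by
        intro u hu
        rcases nreach_one u with h | h
        · exact (tcK hmA hu h).1 hSA
        · exact (tcK hmB hu h).1 ((tcK hmA hmB hnAB).1 hSA)
      obtain ⟨c, hcs, hNc⟩ := GReach.firstStep (htN v hv uA (hmem hmA).1)
        (fun he => (hmem hmA).2 he.symm)
      have hcv : c ≠ v := fun he => hNc.1 he.symm
      exact hNc.2 ⟨(allS c (hmem' hcs hcv)).1, (allS c (hmem' hcs hcv)).2⟩
    · have hnoneA : ¬ R v uA ∧ ¬ R uA v := by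
        constructor
        · intro h
          have h2 : R uA v := by_contra fun hn => hKvA.2.1 ⟨h, hn⟩
          exact hSA ⟨h, h2⟩
        · intro h
          have h2 : R v uA := by_contra fun hn => hKvA.2.2 ⟨h, hn⟩
          exact hSA ⟨h2, h⟩
      have allNone : ∀ u ∈ s', ¬ R v u ∧ ¬ R u v := by
        intro u hu
        rcases nreach_one u with h | h
        · exact (tcK hmA hu h).2 hnoneA
        · exact (tcK hmB hu h).2 ((tcK hmA hmB hnAB).2 hnoneA)
      obtain ⟨c, hcs, hUc⟩ := GReach.firstStep (htU v hv uA (hmem hmA).1)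
        (fun he => (hmem hmA).2 he.symm)
      have hcv : c ≠ v := by
        rintro rfl
        rcases hUc with h | h <;> exact hirr _ h
      rcases hUc with h | h
      · exact (allNone c (hmem' hcs hcv)).1 h
      · exact (allNone c (hmem' hcs hcv)).2 h
  · push_neg at hallK
    obtain ⟨x0, hx0s, hx0⟩ := hallK
    by_cases hbc : asymPart R v x0
    · -- A v x0 : "upper" branch
      have h0 : asymPart R v x0 := hbc
      obtain ⟨y', z, hXy', hXz, hy's, hzs, hKyz, -⟩ :=
        GReach.exit (fun y => asymPart R v y) (htK x0 (hmem hx0s).1 v hv) h0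
          (fun h => hirr v h.1)
      have hzv : z ≠ v := fun he => (he ▸ hKyz.2.2) hXy'
      have hy'v : y' ≠ v := (ane hirr hwt hXy').symm
      have hzs' : z ∈ s' := hmem' hzs hzv
      have hy's' : y' ∈ s' := hmem' hy's hy'v
      have hKvz : Ke R v z :=
        ⟨fun he => hzv he.symm, hXz, fun h => hKyz.2.2 (atrans hirr hwt h hXy')⟩
      obtain ⟨w, hws, hKvw, hnwz⟩ : ∃ w, w ∈ s' ∧ Ke R v w ∧ ¬ GReach (Ke R) s' w z := by
        rcases nreach_one z with h | h
        · exact ⟨uA, hmA, hKvA, h⟩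
        · exact ⟨uB, hmB, hKvB, h⟩
      have hrzy' : GReach (Ke R) s' z y' := GReach.single hzs' hy's' (Ke.symm' _ _ hKyz)
      have hAwz : asymPart R w z := by
        rcases nrelK hws hzs' hnwz with h | h
        · exact h
        · rcases KL2 hirr hwt hrzy' hws h with h2 | h2
          · exact ((hKvw.2.1 (atrans hirr hwt hXy' h2)).elim)
          · exact ((hnwz (hKsym h2)).elim)
      have hAwy' : asymPart R w y' := by
        rcases KL2' hirr hwt hrzy' hws hAwz with h2 | h2
        · exact h2
        · exact ((hnwz (hKsym h2)).elim)
      exact hnf ⟨v, w, y', z,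
        ((hmem hws).2).symm, hy'v.symm, hzv.symm,
        ane hirr hwt hAwy', ane hirr hwt hAwz, hKyz.1,
        hXy', hAwy', hAwz,
        hKvw.2.1, hKvw.2.2, hKvz.2.1, hKvz.2.2, hKyz.2.1, hKyz.2.2,
        fun h => h.2 hXy'.1, fun h => h.2 hAwy'.1, fun h => h.2 hAwz.1⟩
    · -- A x0 v : "lower" branch
      have h0 : asymPart R x0 v := hx0 hbc
      obtain ⟨x', z, hXx', hXz, hx's, hzs, hKxz, -⟩ :=
        GReach.exit (fun x => asymPart R x v) (htK x0 (hmem hx0s).1 v hv) h0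
          (fun h => hirr v h.1)
      have hzv : z ≠ v := fun he => (he ▸ hKxz.2.1) hXx'
      have hx'v : x' ≠ v := ane hirr hwt hXx'
      have hzs' : z ∈ s' := hmem' hzs hzv
      have hx's' : x' ∈ s' := hmem' hx's hx'v
      have hKvz : Ke R v z :=
        ⟨fun he => hzv he.symm, fun h => hKxz.2.1 (atrans hirr hwt hXx' h), hXz⟩
      obtain ⟨w, hws, hKvw, hnwz⟩ : ∃ w, w ∈ s' ∧ Ke R v w ∧ ¬ GReach (Ke R) s' w z := by
        rcases nreach_one z with h | h
        · exact ⟨uA, hmA, hKvA, h⟩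
        · exact ⟨uB, hmB, hKvB, h⟩
      have hrzx' : GReach (Ke R) s' z x' := GReach.single hzs' hx's' (Ke.symm' _ _ hKxz)
      have hAzw : asymPart R z w := by
        rcases nrelK hws hzs' hnwz with h | h
        · rcases KL2' hirr hwt hrzx' hws h with h2 | h2
          · exact ((hKvw.2.2 (atrans hirr hwt h2 hXx')).elim)
          · exact ((hnwz (hKsym h2)).elim)
        · exact h
      have hAx'w : asymPart R x' w := by
        rcases KL2 hirr hwt hrzx' hws hAzw with h2 | h2
        · exact h2
        · exact ((hnwz (hKsym h2)).elim)
      exact hnf ⟨z, x', w, v,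
        hKxz.1.symm, ane hirr hwt hAzw, hzv,
        ane hirr hwt hAx'w, hx'v, (hmem hws).2,
        hAzw, hAx'w, hXx',
        hKxz.2.2, hKxz.2.1, hKvz.2.2, hKvz.2.1, hKvw.2.2, hKvw.2.1,
        fun h => h.2 hAzw.1, fun h => h.2 hAx'w.1, fun h => h.2 hXx'.1⟩

end Core4

section Core5
set_option linter.unusedSectionVars false
variable {V : Type} [DecidableEq V] {R : V → V → Prop}
variable (hirr : ∀ a, ¬ R a a) (hwt : WeaklyTransitive R)
variable (hnf : NFree (asymPart R)) (hpf : P4Free (symPart R))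
include hirr hwt hnf hpf

lemma coreC : ∀ n (s : Finset V), s.card ≤ n → 2 ≤ s.card →
    (∀ a ∈ s, ∀ b ∈ s, GReach (Ue R) s a b) →
    (∀ a ∈ s, ∀ b ∈ s, GReach (Ne' R) s a b) →
    (∀ a ∈ s, ∀ b ∈ s, GReach (Ke R) s a b) → False := by
  intro n
  induction n with
  | zero => intro s h h2 _ _ _; omega
  | succ n ih =>
    intro s hcard h2 htU htN htK
    by_cases hc2 : s.card = 2
    · obtain ⟨x, y, hxy, rfl⟩ := Finset.card_eq_two.mp hc2
      have hx : x ∈ ({x, y} : Finset V) := by simp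
      have hy : y ∈ ({x, y} : Finset V) := by simp
      obtain ⟨c, hcs, hUc⟩ := GReach.firstStep (htU x hx y hy) hxy
      have hUe : Ue R x y := by
        rcases Finset.mem_insert.mp hcs with rfl | hcs'
        · rcases hUc with h | h <;> exact (hirr _ h).elim
        · exact (Finset.mem_singleton.mp hcs') ▸ hUc
      obtain ⟨c2, hcs2, hNc⟩ := GReach.firstStep (htN x hx y hy) hxy
      have hNe : Ne' R x y := by
        rcases Finset.mem_insert.mp hcs2 with rfl | hcs'
        · exact (hNc.1 rfl).elim
        · exact (Finset.mem_singleton.mp hcs') ▸ hNc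
      obtain ⟨c3, hcs3, hKc⟩ := GReach.firstStep (htK x hx y hy) hxy
      have hKe2 : Ke R x y := by
        rcases Finset.mem_insert.mp hcs3 with rfl | hcs'
        · exact (hKc.1 rfl).elim
        · exact (Finset.mem_singleton.mp hcs') ▸ hKc
      rcases hUe with h | h
      · have h2' : R y x := by_contra fun hn => hKe2.2.1 ⟨h, hn⟩
        exact hNe.2 ⟨h, h2'⟩
      · have h2' : R x y := by_contra fun hn => hKe2.2.2 ⟨h, hn⟩
        exact hNe.2 ⟨h2', h⟩
    · have hsne : s.Nonempty := Finset.card_pos.mp (by omega)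
      obtain ⟨v, hv⟩ := hsne
      have hcard' : (s.erase v).card = s.card - 1 := Finset.card_erase_of_mem hv
      by_cases hU' : ∀ a ∈ s.erase v, ∀ b ∈ s.erase v, GReach (Ue R) (s.erase v) a b
      · by_cases hN' : ∀ a ∈ s.erase v, ∀ b ∈ s.erase v, GReach (Ne' R) (s.erase v) a b
        · by_cases hK' : ∀ a ∈ s.erase v, ∀ b ∈ s.erase v, GReach (Ke R) (s.erase v) a b
          · exact ih (s.erase v) (by omega) (by omega) hU' hN' hK'
          · push_neg at hK'
            obtain ⟨a, ha, b, hb, hnr⟩ := hK'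
            exact caseK hirr hwt hnf hpf hv htU htN htK ha hb hnr
        · push_neg at hN'
          obtain ⟨a, ha, b, hb, hnr⟩ := hN'
          exact caseN hirr hwt hnf hpf hv htU htN htK ha hb hnr
      · push_neg at hU'
        obtain ⟨a, ha, b, hb, hnr⟩ := hU'
        exact caseU hirr hwt hnf hpf hv htU htN htK ha hb hnr

omit hnf hpf in
lemma exists_amax : ∀ n (s : Finset V), s.card ≤ n → s.Nonempty →
    ∃ w ∈ s, ∀ y ∈ s, ¬ asymPart R w y := by
  intro n
  induction n with
  | zero =>
      intro s h hne
      have := Finset.card_pos.mpr hne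
      omega
  | succ n ih =>
    intro s hcard hne
    classical
    obtain ⟨a, ha⟩ := hne
    by_cases h : ∃ y ∈ s, asymPart R a y
    · obtain ⟨y0, hy0, hay0⟩ := h
      set t := s.filter (fun z => asymPart R a z) with ht
      have hts : t ⊆ s := Finset.filter_subset _ _
      have hat : a ∉ t := fun hh => (hirr a) ((Finset.mem_filter.mp hh).2.1)
      have htcard : t.card ≤ n := by
        have h1 : t.card < s.card :=
          Finset.card_lt_card ((Finset.ssubset_iff_of_subset hts).mpr ⟨a, ha, hat⟩)
        omega
      have htne : t.Nonempty := ⟨y0, Finset.mem_filter.mpr ⟨hy0, hay0⟩⟩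
      obtain ⟨w, hwmem, hwmax⟩ := ih t htcard htne
      refine ⟨w, hts hwmem, fun y hy hA => ?_⟩
      have haw : asymPart R a w := (Finset.mem_filter.mp hwmem).2
      have hay : asymPart R a y := atrans hirr hwt haw hA
      exact hwmax y (Finset.mem_filter.mpr ⟨hy, hay⟩) hA
    · push_neg at h
      exact ⟨a, ha, h⟩

lemma split (s : Finset V) (h2 : 2 ≤ s.card) :
    ∃ X Y : Finset V, X.Nonempty ∧ Y.Nonempty ∧ (∀ x ∈ X, x ∉ Y) ∧ X ∪ Y = s ∧
      ((∀ x ∈ X, ∀ y ∈ Y, ¬ R x y ∧ ¬ R y x) ∨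
       (∀ x ∈ X, ∀ y ∈ Y, R x y ∧ R y x) ∨
       (∀ x ∈ X, ∀ y ∈ Y, R x y ∧ ¬ R y x)) := by
  classical
  by_cases htU : ∀ a ∈ s, ∀ b ∈ s, GReach (Ue R) s a b
  · by_cases htN : ∀ a ∈ s, ∀ b ∈ s, GReach (Ne' R) s a b
    · by_cases htK : ∀ a ∈ s, ∀ b ∈ s, GReach (Ke R) s a b
      · exact (coreC hirr hwt hnf hpf s.card s le_rfl h2 htU htN htK).elim
      · push_neg at htK
        obtain ⟨a0, ha0, b0, hb0, hnr⟩ := htK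
        obtain ⟨w, hws, hwmax⟩ := exists_amax hirr hwt s.card s le_rfl ⟨a0, ha0⟩
        set X := s.filter (fun x => ¬ GReach (Ke R) s x w) with hX
        set Y := s.filter (fun x => GReach (Ke R) s x w) with hY
        have hKsym : ∀ {x y : V}, GReach (Ke R) s x y → GReach (Ke R) s y x :=
          fun h => GReach.symm (Ke.symm' (R := R)) h
        have hXne : X.Nonempty := by
          by_cases h : GReach (Ke R) s a0 w
          · exact ⟨b0, Finset.mem_filter.mpr ⟨hb0, fun hr => hnr (h.trans (hKsym hr))⟩⟩
          · exact ⟨a0, Finset.mem_filter.mpr ⟨ha0, h⟩⟩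
        have hYne : Y.Nonempty := ⟨w, Finset.mem_filter.mpr ⟨hws, GReach.refl⟩⟩
        refine ⟨X, Y, hXne, hYne, ?_, ?_, Or.inr (Or.inr ?_)⟩
        · intro x hx hxY
          exact (Finset.mem_filter.mp hx).2 (Finset.mem_filter.mp hxY).2
        · apply Finset.Subset.antisymm
          · intro x hx
            rcases Finset.mem_union.mp hx with h | h
            · exact (Finset.mem_filter.mp h).1
            · exact (Finset.mem_filter.mp h).1
          · intro x hx
            by_cases h : GReach (Ke R) s x w
            · exact Finset.mem_union_right _ (Finset.mem_filter.mpr ⟨hx, h⟩)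
            · exact Finset.mem_union_left _ (Finset.mem_filter.mpr ⟨hx, h⟩)
        · intro x hx y hy
          obtain ⟨hxs, hxn⟩ := Finset.mem_filter.mp hx
          obtain ⟨hys, hyr⟩ := Finset.mem_filter.mp hy
          have hnxy : ¬ GReach (Ke R) s x y := fun h => hxn (h.trans hyr)
          have hne : x ≠ y := fun he => hxn (he ▸ hyr)
          have hAxy : asymPart R x y := by
            by_cases h1 : asymPart R x y
            · exact h1
            · by_cases hh2 : asymPart R y x
              · rcases KL2 hirr hwt hyr hxs hh2 with h3 | h3
                · exact (hwmax x hxs h3).elim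
                · exact (hxn ((hKsym h3).trans hyr)).elim
              · exact (hnxy (GReach.single hxs hys ⟨hne, h1, hh2⟩)).elim
          exact ⟨hAxy.1, hAxy.2⟩
    · push_neg at htN
      obtain ⟨a0, ha0, b0, hb0, hnr⟩ := htN
      set X := s.filter (fun x => GReach (Ne' R) s a0 x) with hX
      set Y := s.filter (fun x => ¬ GReach (Ne' R) s a0 x) with hY
      have hXne : X.Nonempty := ⟨a0, Finset.mem_filter.mpr ⟨ha0, GReach.refl⟩⟩
      have hYne : Y.Nonempty := ⟨b0, Finset.mem_filter.mpr ⟨hb0, hnr⟩⟩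
      refine ⟨X, Y, hXne, hYne, ?_, ?_, Or.inr (Or.inl ?_)⟩
      · intro x hx hxY
        exact (Finset.mem_filter.mp hxY).2 (Finset.mem_filter.mp hx).2
      · apply Finset.Subset.antisymm
        · intro x hx
          rcases Finset.mem_union.mp hx with h | h
          · exact (Finset.mem_filter.mp h).1
          · exact (Finset.mem_filter.mp h).1
        · intro x hx
          by_cases h : GReach (Ne' R) s a0 x
          · exact Finset.mem_union_left _ (Finset.mem_filter.mpr ⟨hx, h⟩)
          · exact Finset.mem_union_right _ (Finset.mem_filter.mpr ⟨hx, h⟩)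
      · intro x hx y hy
        obtain ⟨hxs, hxr⟩ := Finset.mem_filter.mp hx
        obtain ⟨hys, hyn⟩ := Finset.mem_filter.mp hy
        have hnxy : ¬ Ne' R x y := fun h => hyn (hxr.trans (GReach.single hxs hys h))
        have hne : x ≠ y := fun he => hyn (he ▸ hxr)
        exact by_contra fun hn => hnxy ⟨hne, hn⟩
  · push_neg at htU
    obtain ⟨a0, ha0, b0, hb0, hnr⟩ := htU
    set X := s.filter (fun x => GReach (Ue R) s a0 x) with hX
    set Y := s.filter (fun x => ¬ GReach (Ue R) s a0 x) with hY
    have hXne : X.Nonempty := ⟨a0, Finset.mem_filter.mpr ⟨ha0, GReach.refl⟩⟩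
    have hYne : Y.Nonempty := ⟨b0, Finset.mem_filter.mpr ⟨hb0, hnr⟩⟩
    refine ⟨X, Y, hXne, hYne, ?_, ?_, Or.inl ?_⟩
    · intro x hx hxY
      exact (Finset.mem_filter.mp hxY).2 (Finset.mem_filter.mp hx).2
    · apply Finset.Subset.antisymm
      · intro x hx
        rcases Finset.mem_union.mp hx with h | h
        · exact (Finset.mem_filter.mp h).1
        · exact (Finset.mem_filter.mp h).1
      · intro x hx
        by_cases h : GReach (Ue R) s a0 x
        · exact Finset.mem_union_left _ (Finset.mem_filter.mpr ⟨hx, h⟩)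
        · exact Finset.mem_union_right _ (Finset.mem_filter.mpr ⟨hx, h⟩)
    · intro x hx y hy
      obtain ⟨hxs, hxr⟩ := Finset.mem_filter.mp hx
      obtain ⟨hys, hyn⟩ := Finset.mem_filter.mp hy
      constructor
      · exact fun h => hyn (hxr.trans (GReach.single hxs hys (Or.inl h)))
      · exact fun h => hyn (hxr.trans (GReach.single hxs hys (Or.inr h)))

lemma termFor : ∀ n (s : Finset V), s.card ≤ n → s.Nonempty →
    ∃ T : DTerm V, T.leaves.Nodup ∧ (∀ x, x ∈ T.leaves ↔ x ∈ s) ∧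
      (∀ a b, T.rel a b ↔ (R a b ∧ a ∈ s ∧ b ∈ s)) := by
  intro n
  induction n with
  | zero =>
      intro s h hne
      have := Finset.card_pos.mpr hne
      omega
  | succ n ih =>
    intro s hcard hne
    classical
    by_cases h1 : s.card = 1
    · obtain ⟨v, rfl⟩ := Finset.card_eq_one.mp h1
      refine ⟨DTerm.leaf v, by simp [DTerm.leaves], by simp [DTerm.leaves], ?_⟩
      intro a b
      constructor
      · intro h; exact (h : False).elim
      · rintro ⟨hr, ha, hb⟩
        rw [Finset.mem_singleton] at ha hb
        subst ha; subst hb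
        exact (hirr _ hr).elim
    · have h2 : 2 ≤ s.card := by
        have := Finset.card_pos.mpr hne
        omega
      obtain ⟨X, Y, hXne, hYne, hdisj, hunion, htype⟩ := split hirr hwt hnf hpf s h2
      have hXsub : X ⊆ s := hunion ▸ Finset.subset_union_left
      have hYsub : Y ⊆ s := hunion ▸ Finset.subset_union_right
      have hd : Disjoint X Y := Finset.disjoint_left.mpr (fun {x} hx hy => hdisj x hx hy)
      have hcards : s.card = X.card + Y.card := by
        rw [← hunion]
        exact Finset.card_union_of_disjoint hd
      have hX1 : 1 ≤ X.card := Finset.card_pos.mpr hXne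
      have hY1 : 1 ≤ Y.card := Finset.card_pos.mpr hYne
      obtain ⟨TX, hndX, hlX, hrX⟩ := ih X (by omega) hXne
      obtain ⟨TY, hndY, hlY, hrY⟩ := ih Y (by omega) hYne
      have hnodup : (TX.leaves ++ TY.leaves).Nodup := by
        rw [List.nodup_append]
        exact ⟨hndX, hndY, fun x hx y hy hxy => hdisj x ((hlX x).1 hx) ((hlY x).1 (by subst hxy; exact hy))⟩
      have hleaf : ∀ x, (x ∈ TX.leaves ++ TY.leaves ↔ x ∈ s) := by
        intro x
        rw [List.mem_append, hlX, hlY, ← Finset.mem_union, hunion]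
      have hmemsplit : ∀ {x : V}, x ∈ s → x ∈ X ∨ x ∈ Y := by
        intro x hx
        exact Finset.mem_union.mp (hunion ▸ hx)
      rcases htype with ht | ht | ht
      · refine ⟨DTerm.par TX TY, hnodup, hleaf, ?_⟩
        intro a b
        have hiff : (DTerm.par TX TY).rel a b ↔ TX.rel a b ∨ TY.rel a b := Iff.rfl
        rw [hiff, hrX, hrY]
        constructor
        · rintro (⟨hr, ha, hb⟩ | ⟨hr, ha, hb⟩)
          · exact ⟨hr, hXsub ha, hXsub hb⟩
          · exact ⟨hr, hYsub ha, hYsub hb⟩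
        · rintro ⟨hr, ha, hb⟩
          rcases hmemsplit ha with ha' | ha' <;> rcases hmemsplit hb with hb' | hb'
          · exact Or.inl ⟨hr, ha', hb'⟩
          · exact ((ht a ha' b hb').1 hr).elim
          · exact ((ht b hb' a ha').2 hr).elim
          · exact Or.inr ⟨hr, ha', hb'⟩
      · refine ⟨DTerm.tens TX TY, hnodup, hleaf, ?_⟩
        intro a b
        have hiff : (DTerm.tens TX TY).rel a b ↔ TX.rel a b ∨ TY.rel a b ∨
            (a ∈ TX.leaves ∧ b ∈ TY.leaves) ∨ (a ∈ TY.leaves ∧ b ∈ TX.leaves) := Iff.rfl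
        rw [hiff, hrX, hrY]
        constructor
        · rintro (⟨hr, ha, hb⟩ | ⟨hr, ha, hb⟩ | ⟨ha, hb⟩ | ⟨ha, hb⟩)
          · exact ⟨hr, hXsub ha, hXsub hb⟩
          · exact ⟨hr, hYsub ha, hYsub hb⟩
          · have ha' := (hlX a).1 ha
            have hb' := (hlY b).1 hb
            exact ⟨(ht a ha' b hb').1, hXsub ha', hYsub hb'⟩
          · have ha' := (hlY a).1 ha
            have hb' := (hlX b).1 hb
            exact ⟨(ht b hb' a ha').2, hYsub ha', hXsub hb'⟩
        · rintro ⟨hr, ha, hb⟩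
          rcases hmemsplit ha with ha' | ha' <;> rcases hmemsplit hb with hb' | hb'
          · exact Or.inl ⟨hr, ha', hb'⟩
          · exact Or.inr (Or.inr (Or.inl ⟨(hlX a).2 ha', (hlY b).2 hb'⟩))
          · exact Or.inr (Or.inr (Or.inr ⟨(hlY a).2 ha', (hlX b).2 hb'⟩))
          · exact Or.inr (Or.inl ⟨hr, ha', hb'⟩)
      · refine ⟨DTerm.seq TX TY, hnodup, hleaf, ?_⟩
        intro a b
        have hiff : (DTerm.seq TX TY).rel a b ↔ TX.rel a b ∨ TY.rel a b ∨
            (a ∈ TX.leaves ∧ b ∈ TY.leaves) := Iff.rfl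
        rw [hiff, hrX, hrY]
        constructor
        · rintro (⟨hr, ha, hb⟩ | ⟨hr, ha, hb⟩ | ⟨ha, hb⟩)
          · exact ⟨hr, hXsub ha, hXsub hb⟩
          · exact ⟨hr, hYsub ha, hYsub hb⟩
          · have ha' := (hlX a).1 ha
            have hb' := (hlY b).1 hb
            exact ⟨(ht a ha' b hb').1, hXsub ha', hYsub hb'⟩
        · rintro ⟨hr, ha, hb⟩
          rcases hmemsplit ha with ha' | ha' <;> rcases hmemsplit hb with hb' | hb'
          · exact Or.inl ⟨hr, ha', hb'⟩
          · exact Or.inr (Or.inr ⟨(hlX a).2 ha', (hlY b).2 hb'⟩)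
          · exact ((ht b hb' a ha').2 hr).elim
          · exact Or.inr (Or.inl ⟨hr, ha', hb'⟩)

end Core5

section Congr
variable {V : Type}

lemma NFree_congr {S S' : V → V → Prop} (h : ∀ x y, S x y ↔ S' x y) (hn : NFree S) :
    NFree S' := by
  rintro ⟨a, b, c, d, n1, n2, n3, n4, n5, n6, p1, p2, p3, q1, q2, q3, q4, q5, q6, q7, q8, q9⟩
  exact hn ⟨a, b, c, d, n1, n2, n3, n4, n5, n6, (h _ _).2 p1, (h _ _).2 p2, (h _ _).2 p3,
    fun hh => q1 ((h _ _).1 hh), fun hh => q2 ((h _ _).1 hh), fun hh => q3 ((h _ _).1 hh),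
    fun hh => q4 ((h _ _).1 hh), fun hh => q5 ((h _ _).1 hh), fun hh => q6 ((h _ _).1 hh),
    fun hh => q7 ((h _ _).1 hh), fun hh => q8 ((h _ _).1 hh), fun hh => q9 ((h _ _).1 hh)⟩

lemma P4Free_congr {S S' : V → V → Prop} (h : ∀ x y, S x y ↔ S' x y) (hn : P4Free S) :
    P4Free S' := by
  rintro ⟨a, b, c, d, n1, n2, n3, n4, n5, n6, p1, p2, p3, q1, q2, q3⟩
  exact hn ⟨a, b, c, d, n1, n2, n3, n4, n5, n6, (h _ _).2 p1, (h _ _).2 p2, (h _ _).2 p3,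
    fun hh => q1 ((h _ _).1 hh), fun hh => q2 ((h _ _).1 hh), fun hh => q3 ((h _ _).1 hh)⟩

lemma WT_congr {R R' : V → V → Prop} (h : ∀ x y, R x y ↔ R' x y)
    (hw : WeaklyTransitive R) : WeaklyTransitive R' := by
  intro a b c
  constructor
  · intro hA hr
    exact (h _ _).1 ((hw a b c).1 ⟨(h _ _).2 hA.1, fun hh => hA.2 ((h _ _).1 hh)⟩ ((h _ _).2 hr))
  · intro hr hA
    exact (h _ _).1 ((hw a b c).2 ((h _ _).2 hr) ⟨(h _ _).2 hA.1, fun hh => hA.2 ((h _ _).1 hh)⟩)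

end Congr

theorem dicograph_characterisation {V : Type} (E : Set V) (R : V → V → Prop)
    (hfin : E.Finite) (hne : E.Nonempty)
    (hirr : ∀ a, ¬ R a a) (hsupp : ∀ a b, R a b → a ∈ E ∧ b ∈ E) :
    IsDicograph E R ↔
      NFree (asymPart R) ∧ P4Free (symPart R) ∧ WeaklyTransitive R := by
  classical
  constructor
  · rintro ⟨T, hnd, hl, hrel⟩
    obtain ⟨hwt', hnf', hpf'⟩ := DTerm.good T hnd
    have hasym : ∀ x y, asymPart T.rel x y ↔ asymPart R x y := fun x y =>
      and_congr (hrel x y) (not_congr (hrel y x))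
    have hsym : ∀ x y, symPart T.rel x y ↔ symPart R x y := fun x y =>
      and_congr (hrel x y) (hrel y x)
    exact ⟨NFree_congr hasym hnf', P4Free_congr hsym hpf', WT_congr hrel hwt'⟩
  · rintro ⟨hnf, hpf, hwt⟩
    have hsne : hfin.toFinset.Nonempty := by
      obtain ⟨x, hx⟩ := hne
      exact ⟨x, hfin.mem_toFinset.mpr hx⟩
    obtain ⟨T, hnd, hl, hrel⟩ :=
      termFor hirr hwt hnf hpf hfin.toFinset.card hfin.toFinset le_rfl hsne
    refine ⟨T, hnd, ?_, ?_⟩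
    · intro x
      rw [hl x, Set.Finite.mem_toFinset]
    · intro a b
      rw [hrel a b]
      constructor
      · exact fun h => h.1
      · intro h
        exact ⟨h, hfin.mem_toFinset.mpr (hsupp a b h).1, hfin.mem_toFinset.mpr (hsupp a b h).2⟩
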